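/- arXiv:2111.09277 — 3 statements merged into one kernel-verified Lean document; each statement's English description precedes it below -/
import Mathlib

section
/- Let p ∈ (1/2, 1), σ, τ > 0 with σ ≠ τ, and ε ∈ (0, 1/2]. Assume that for every dimension d ≥ 1 there exists k ≥ 0 with ℙ(‖σδ‖₂²/d ∈ [σ² − k, σ² + k]) = p. Then there exists a constant C > 0, depending only on p, σ, τ, ε and m₄, such that for every d ≥ 1, every c ∈ {0,1}, and every pair x, x′ ∈ ℝ^d with ‖x − x′‖₂ ≤ ε, the infimum of ℙ(f(x′ + τδ) = c), taken over all measurable functions f : ℝ^d → {0,1} satisfying ℙ(f(x + σδ) = c) = p, is at most C/d; equivalently, sup_{x,x′: ‖x−x′‖₂ ≤ ε} inf_{f measurable, ℙ(f(x+σδ)=c)=p} ℙ(f(x′+τδ)=c) ≤ C/d. -/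
open MeasureTheory

section Aux

variable {α : Type*} [MeasurableSpace α]

/-- Product of single-coordinate integrable functions over a finite product of a probability
measure: integrability and the value of the integral. -/
private lemma pi_prod_aux (m : Measure α) [IsProbabilityMeasure m]
    {d : ℕ} (F : Fin d → α → ℝ) (hF : ∀ i, Integrable (F i) m) :
    Integrable (fun x : Fin d → α => ∏ i, F i (x i)) (Measure.pi fun _ => m) ∧
    ∫ x : Fin d → α, ∏ i, F i (x i) ∂(Measure.pi fun _ => m) = ∏ i, ∫ t, F i t ∂m := by
  letI : MeasureSpace α := ⟨m⟩
  exact ⟨Integrable.fintype_prod hF, integral_fintype_prod_eq_prod (μ := fun _ => m) F⟩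

private lemma pi_eval_aux (m : Measure α) [IsProbabilityMeasure m]
    {d : ℕ} (h : α → ℝ) (hh : Integrable h m) (i : Fin d) :
    Integrable (fun x : Fin d → α => h (x i)) (Measure.pi fun _ => m) ∧
    ∫ x : Fin d → α, h (x i) ∂(Measure.pi fun _ => m) = ∫ t, h t ∂m := by
  classical
  set F : Fin d → α → ℝ := fun k t => if k = i then h t else 1 with hFdef
  have hFint : ∀ k, Integrable (F k) m := by
    intro k
    by_cases hk : k = i
    · simpa [hFdef, hk] using hh
    · simpa [hFdef, hk] using (integrable_const (1 : ℝ) (μ := m))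
  obtain ⟨hInt, hEq⟩ := pi_prod_aux m F hFint
  have hptw : ∀ x : Fin d → α, (∏ k, F k (x k)) = h (x i) := by
    intro x
    have := Finset.prod_ite_eq' (Finset.univ : Finset (Fin d)) i (fun k => h (x k))
    simpa [hFdef] using this
  have hval : ∀ k, ∫ t, F k t ∂m = if k = i then ∫ t, h t ∂m else 1 := by
    intro k
    by_cases hk : k = i
    · simp [hFdef, hk]
    · simp [hFdef, hk]
  constructor
  · refine hInt.congr (Filter.Eventually.of_forall fun x => ?_)
    exact hptw x
  · have h1 : (fun x : Fin d → α => h (x i)) = fun x => ∏ k, F k (x k) :=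
      funext fun x => (hptw x).symm
    rw [h1, hEq]
    calc (∏ k, ∫ t, F k t ∂m) = ∏ k, if k = i then ∫ t, h t ∂m else 1 :=
          Finset.prod_congr rfl fun k _ => hval k
      _ = ∫ t, h t ∂m := by
          simpa using Finset.prod_ite_eq' (Finset.univ : Finset (Fin d)) i
            (fun _ => ∫ t, h t ∂m)

private lemma prod_two_aux {M : Type*} [CommMonoid M] {d : ℕ} {i j : Fin d} (hij : i ≠ j)
    (a b : M) :
    (∏ k : Fin d, (if k = i then a else if k = j then b else 1)) = a * b := by
  classical
  rw [← Finset.mul_prod_erase Finset.univ _ (Finset.mem_univ i)]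
  have hji : j ∈ (Finset.univ : Finset (Fin d)).erase i := by
    simp [Finset.mem_erase, hij.symm]
  rw [← Finset.mul_prod_erase _ _ hji]
  have h1 : (∏ k ∈ (((Finset.univ : Finset (Fin d)).erase i).erase j),
      (if k = i then a else if k = j then b else 1)) = 1 := by
    refine Finset.prod_eq_one fun k hk => ?_
    have hk1 : k ≠ j := (Finset.mem_erase.mp hk).1
    have hk2 : k ≠ i := (Finset.mem_erase.mp (Finset.mem_erase.mp hk).2).1
    simp [hk1, hk2]
  rw [h1]
  simp [hij.symm, Ne.symm hij, hij]

private lemma pi_pair_aux (m : Measure α) [IsProbabilityMeasure m]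
    {d : ℕ} {i j : Fin d} (hij : i ≠ j) (a b : α → ℝ)
    (ha : Integrable a m) (hb : Integrable b m) :
    Integrable (fun x : Fin d → α => a (x i) * b (x j)) (Measure.pi fun _ => m) ∧
    ∫ x : Fin d → α, a (x i) * b (x j) ∂(Measure.pi fun _ => m)
      = (∫ t, a t ∂m) * ∫ t, b t ∂m := by
  classical
  set F : Fin d → α → ℝ := fun k t => if k = i then a t else if k = j then b t else 1 with hFdef
  have hFint : ∀ k, Integrable (F k) m := by
    intro k
    by_cases hk : k = i
    · simpa [hFdef, hk] using ha
    · by_cases hk' : k = j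
      · simpa [hFdef, hk, hk', Ne.symm hij] using hb
      · simpa [hFdef, hk, hk'] using (integrable_const (1 : ℝ) (μ := m))
  obtain ⟨hInt, hEq⟩ := pi_prod_aux m F hFint
  have hptw : ∀ x : Fin d → α, (∏ k, F k (x k)) = a (x i) * b (x j) := by
    intro x
    have h1 : (∏ k, F k (x k))
        = ∏ k : Fin d, (if k = i then a (x i) else if k = j then b (x j) else 1) := by
      refine Finset.prod_congr rfl fun k _ => ?_
      by_cases hk : k = i
      · simp [hFdef, hk]
      · by_cases hk' : k = j
        · simp [hFdef, hk, hk', Ne.symm hij]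
        · simp [hFdef, hk, hk']
    rw [h1, prod_two_aux hij]
  have hval : ∀ k, ∫ t, F k t ∂m
      = if k = i then ∫ t, a t ∂m else if k = j then ∫ t, b t ∂m else 1 := by
    intro k
    by_cases hk : k = i
    · simp [hFdef, hk]
    · by_cases hk' : k = j
      · simp [hFdef, hk, hk', Ne.symm hij]
      · simp [hFdef, hk, hk']
  constructor
  · exact hInt.congr (Filter.Eventually.of_forall fun x => hptw x)
  · have h1 : (fun x : Fin d → α => a (x i) * b (x j)) = fun x => ∏ k, F k (x k) :=
      funext fun x => (hptw x).symm
    rw [h1, hEq]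
    calc (∏ k, ∫ t, F k t ∂m)
        = ∏ k : Fin d, (if k = i then ∫ t, a t ∂m else if k = j then ∫ t, b t ∂m else 1) :=
          Finset.prod_congr rfl fun k _ => hval k
      _ = (∫ t, a t ∂m) * ∫ t, b t ∂m := prod_two_aux hij _ _

/-- Second moment of a sum of independent, mean-zero, single-coordinate functions. -/
private lemma pi_sum_sq_aux (m : Measure α) [IsProbabilityMeasure m]
    {d : ℕ} (g : Fin d → α → ℝ) (hg1 : ∀ i, Integrable (g i) m)
    (hg2 : ∀ i, Integrable (fun t => g i t ^ 2) m)
    (hg0 : ∀ i, ∫ t, g i t ∂m = 0) :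
    Integrable (fun x : Fin d → α => (∑ i, g i (x i)) ^ 2) (Measure.pi fun _ => m) ∧
    ∫ x : Fin d → α, (∑ i, g i (x i)) ^ 2 ∂(Measure.pi fun _ => m)
      = ∑ i, ∫ t, g i t ^ 2 ∂m := by
  classical
  have hPint : ∀ i j : Fin d,
      Integrable (fun x : Fin d → α => g i (x i) * g j (x j)) (Measure.pi fun _ => m) := by
    intro i j
    by_cases hij : i = j
    · subst hij
      have h2 : Integrable (fun t => g i t * g i t) m := by
        refine (hg2 i).congr (Filter.Eventually.of_forall fun t => ?_)
        ring
      exact (pi_eval_aux m (fun t => g i t * g i t) h2 i).1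
    · exact (pi_pair_aux m hij (g i) (g j) (hg1 i) (hg1 j)).1
  have hPval : ∀ i j : Fin d,
      ∫ x : Fin d → α, g i (x i) * g j (x j) ∂(Measure.pi fun _ => m)
        = if j = i then ∫ t, g i t ^ 2 ∂m else 0 := by
    intro i j
    by_cases hij : j = i
    · subst hij
      have h2 : Integrable (fun t => g j t * g j t) m := by
        refine (hg2 j).congr (Filter.Eventually.of_forall fun t => ?_)
        ring
      rw [if_pos rfl, (pi_eval_aux m (fun t => g j t * g j t) h2 j).2]
      exact integral_congr_ae (Filter.Eventually.of_forall fun t => by ring)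
    · rw [if_neg hij, (pi_pair_aux m (fun h => hij h.symm) (g i) (g j) (hg1 i) (hg1 j)).2,
        hg0 i, zero_mul]
  have hexp : ∀ x : Fin d → α,
      (∑ i, g i (x i)) ^ 2 = ∑ i, ∑ j, g i (x i) * g j (x j) := by
    intro x
    rw [sq, Finset.sum_mul_sum]
  have hIntSum : Integrable
      (fun x : Fin d → α => ∑ i, ∑ j, g i (x i) * g j (x j)) (Measure.pi fun _ => m) := by
    refine integrable_finset_sum _ fun i _ => integrable_finset_sum _ fun j _ => hPint i j
  constructor
  · exact hIntSum.congr (Filter.Eventually.of_forall fun x => (hexp x).symm)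
  · rw [show (fun x : Fin d → α => (∑ i, g i (x i)) ^ 2)
        = fun x => ∑ i, ∑ j, g i (x i) * g j (x j) from funext hexp]
    rw [integral_finset_sum _ fun i _ => integrable_finset_sum _ fun j _ => hPint i j]
    refine Finset.sum_congr rfl fun i _ => ?_
    rw [integral_finset_sum _ fun j _ => hPint i j]
    calc (∑ j, ∫ x : Fin d → α, g i (x i) * g j (x j) ∂(Measure.pi fun _ => m))
        = ∑ j : Fin d, if j = i then ∫ t, g i t ^ 2 ∂m else 0 :=
          Finset.sum_congr rfl fun j _ => hPval i j
      _ = ∫ t, g i t ^ 2 ∂m := by simp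

/-- Chebyshev-type inequality from a second-moment bound. -/
private lemma cheb_aux (m : Measure α) [IsFiniteMeasure m]
    (Y : α → ℝ) (hY : Integrable (fun a => Y a ^ 2) m) {t : ℝ} (ht : 0 < t) :
    m {a | t ≤ |Y a|} ≤ ENNReal.ofReal ((∫ a, Y a ^ 2 ∂m) / t ^ 2) := by
  have hset : {a | t ≤ |Y a|} ⊆ {a | t ^ 2 ≤ Y a ^ 2} := by
    intro a ha
    have h1 : t ^ 2 ≤ |Y a| ^ 2 := pow_le_pow_left₀ ht.le ha 2
    simpa [sq_abs] using h1
  have h1 := mul_meas_ge_le_integral_of_nonneg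
    (Filter.Eventually.of_forall fun a => sq_nonneg (Y a)) hY (t ^ 2)
  calc m {a | t ≤ |Y a|} ≤ m {a | t ^ 2 ≤ Y a ^ 2} := measure_mono hset
    _ = ENNReal.ofReal (m {a | t ^ 2 ≤ Y a ^ 2}).toReal :=
        (ENNReal.ofReal_toReal (measure_ne_top _ _)).symm
    _ ≤ ENNReal.ofReal ((∫ a, Y a ^ 2 ∂m) / t ^ 2) := by
        refine ENNReal.ofReal_le_ofReal ?_
        rw [le_div_iff₀ (by positivity)]
        calc (m {a | t ^ 2 ≤ Y a ^ 2}).toReal * t ^ 2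
            = t ^ 2 * (m {x | t ^ 2 ≤ Y x ^ 2}).toReal := by ring
          _ ≤ ∫ a, Y a ^ 2 ∂m := h1

end Aux

set_option maxHeartbeats 1000000 in
/-- Theorem 1 (curse of dimensionality for input-dependent randomized smoothing).
`δ : Fin d → ℝ` has law `μ^⊗d` with `μ` of zero mean, unit variance and fourth moment `m₄`.
Let `p ∈ (1/2, 1)`, `σ, τ > 0` with `σ ≠ τ`, `ε ∈ (0, 1/2]`. Assume for every `d ≥ 1` there is
`k ≥ 0` with `ℙ(‖σδ‖₂²/d ∈ [σ² − k, σ² + k]) = p`. Then there is `C > 0` such that for every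
`d ≥ 1`, every `c ∈ {0,1}` (encoded by `Bool`), and all `x, x'` with `‖x − x'‖₂ ≤ ε`,
the infimum over measurable classifiers `f : ℝ^d → {0,1}` with `ℙ(f(x + σδ) = c) = p` of
`ℙ(f(x' + τδ) = c)` is at most `C/d`. -/
theorem curse_of_dimensionality_input_dependent_smoothing
    (μ : Measure ℝ) [IsProbabilityMeasure μ]
    (hmean : ∫ t, t ∂μ = 0) (hvar : ∫ t, t ^ 2 ∂μ = 1)
    (hint : Integrable (fun t : ℝ => t ^ 4) μ)
    (m₄ : ℝ) (hm₄ : ∫ t, t ^ 4 ∂μ = m₄)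
    (p σ τ ε : ℝ)
    (hp : p ∈ Set.Ioo (1 / 2 : ℝ) 1) (hσ : 0 < σ) (hτ : 0 < τ) (hστ : σ ≠ τ)
    (hε : ε ∈ Set.Ioc (0 : ℝ) (1 / 2))
    (hk : ∀ d : ℕ, 1 ≤ d → ∃ k : ℝ, 0 ≤ k ∧
      (Measure.pi fun _ : Fin d => μ)
        {δ | (σ ^ 2 * ∑ i, (δ i) ^ 2) / (d : ℝ) ∈ Set.Icc (σ ^ 2 - k) (σ ^ 2 + k)}
        = ENNReal.ofReal p) :
    ∃ C : ℝ, 0 < C ∧ ∀ d : ℕ, 1 ≤ d → ∀ c : Bool, ∀ x x' : Fin d → ℝ,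
      Real.sqrt (∑ i, (x i - x' i) ^ 2) ≤ ε →
      (⨅ f : {f : (Fin d → ℝ) → Bool // Measurable f ∧
            (Measure.pi fun _ : Fin d => μ) {δ | f (x + σ • δ) = c} = ENNReal.ofReal p},
          (Measure.pi fun _ : Fin d => μ) {δ | f.1 (x' + τ • δ) = c})
        ≤ ENNReal.ofReal (C / (d : ℝ)) := by
  classical
  -- basic integrability of powers
  have hpow : ∀ n : ℕ, n ≤ 4 → Integrable (fun t : ℝ => t ^ n) μ := by
    intro n hn
    refine (hint.add (integrable_const 1)).mono' ?_
      (Filter.Eventually.of_forall fun t => ?_)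
    · exact (measurable_id.pow_const n).aestronglyMeasurable
    · rw [Real.norm_eq_abs, abs_pow]
      rcases le_or_gt (|t|) 1 with h | h
      · have h1 : |t| ^ n ≤ 1 := pow_le_one₀ (abs_nonneg t) h
        have h2 : (0 : ℝ) ≤ t ^ 4 := by positivity
        calc |t| ^ n ≤ 1 := h1
          _ ≤ t ^ 4 + 1 := by linarith
      · have h1 : |t| ^ n ≤ |t| ^ 4 := pow_le_pow_right₀ h.le hn
        have h2 : |t| ^ 4 = t ^ 4 := by
          rw [← abs_pow, abs_of_nonneg (by positivity)]
        calc |t| ^ n ≤ t ^ 4 := h2 ▸ h1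
          _ ≤ t ^ 4 + 1 := by linarith
  -- any polynomial of degree ≤ 4 is integrable
  have hpoly : ∀ c0 c1 c2 c3 c4 : ℝ,
      Integrable (fun t : ℝ => c0 + c1 * t + c2 * t ^ 2 + c3 * t ^ 3 + c4 * t ^ 4) μ := by
    intro c0 c1 c2 c3 c4
    have h0 : Integrable (fun _ : ℝ => c0) μ := integrable_const _
    have h1 := (hpow 1 (by norm_num)).const_mul c1
    have h2 := (hpow 2 (by norm_num)).const_mul c2
    have h3 := (hpow 3 (by norm_num)).const_mul c3
    have h4 := (hpow 4 (by norm_num)).const_mul c4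
    have := (((h0.add h1).add h2).add h3).add h4
    refine this.congr (Filter.Eventually.of_forall fun t => ?_)
    simp [pow_one]
  -- integral of a quadratic
  have hquad : ∀ c0 c1 c2 : ℝ,
      ∫ t, (c0 + c1 * t + c2 * t ^ 2) ∂μ = c0 + c2 := by
    intro c0 c1 c2
    have h0 : Integrable (fun _ : ℝ => c0) μ := integrable_const _
    have h1 := (hpow 1 (by norm_num)).const_mul c1
    have h2 := (hpow 2 (by norm_num)).const_mul c2
    have h1' : Integrable (fun t : ℝ => c1 * t) μ := by
      refine h1.congr (Filter.Eventually.of_forall fun t => ?_); simp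
    have e1 : ∫ t, c1 * t ∂μ = 0 := by
      rw [integral_const_mul, hmean, mul_zero]
    have e2 : ∫ t, c2 * t ^ 2 ∂μ = c2 := by
      rw [integral_const_mul, hvar, mul_one]
    have e0 : ∫ _t : ℝ, c0 ∂μ = c0 := by simp
    calc ∫ t, (c0 + c1 * t + c2 * t ^ 2) ∂μ
        = (∫ t, (c0 + c1 * t) ∂μ) + ∫ t, c2 * t ^ 2 ∂μ := integral_add (h0.add h1') h2
      _ = ((∫ _t, c0 ∂μ) + ∫ t, c1 * t ∂μ) + ∫ t, c2 * t ^ 2 ∂μ := by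
          rw [integral_add h0 h1']
      _ = c0 + c2 := by rw [e0, e1, e2]; ring
  -- the centered square-variable and its variance
  set V : ℝ := ∫ t, (t ^ 2 - 1) ^ 2 ∂μ with hVdef
  have hV0 : 0 ≤ V := integral_nonneg fun t => sq_nonneg _
  have hVint : Integrable (fun t : ℝ => (t ^ 2 - 1) ^ 2) μ := by
    refine (hpoly 1 0 (-2) 0 1).congr (Filter.Eventually.of_forall fun t => by ring)
  have hg20 : ∫ t, (t ^ 2 - 1) ∂μ = 0 := by
    have := hquad (-1) 0 1
    rw [show (fun t : ℝ => t ^ 2 - 1) = fun t : ℝ => -1 + 0 * t + 1 * t ^ 2 from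
      funext fun t => by ring]
    rw [this]; ring
  have hg2int : Integrable (fun t : ℝ => t ^ 2 - 1) μ := by
    refine ((hpow 2 (by norm_num)).sub (integrable_const 1)).congr
      (Filter.Eventually.of_forall fun t => rfl)
  -- key positive constants
  have hp1 : 0 < 1 - p := by linarith [hp.2]
  have hppos : 0 < p := by linarith [hp.1]
  have hΔpos : 0 < |σ ^ 2 - τ ^ 2| := by
    rw [abs_pos, sub_ne_zero]
    intro h
    exact hστ (by
      have h1 : σ = Real.sqrt (σ ^ 2) := by rw [Real.sqrt_sq hσ.le]
      have h2 : τ = Real.sqrt (τ ^ 2) := by rw [Real.sqrt_sq hτ.le]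
      rw [h1, h2, h])
  set Δ : ℝ := |σ ^ 2 - τ ^ 2| with hΔdef
  set d₀ : ℝ := 16 * σ ^ 4 * V / ((1 - p) * Δ ^ 2) with hd₀def
  have hd₀0 : 0 ≤ d₀ := by
    apply div_nonneg
    · positivity
    · positivity
  set K : ℝ := 2 * τ ^ 4 * V + 2 * τ ^ 2 with hKdef
  have hK0 : 0 ≤ K := by positivity
  refine ⟨4 * K / Δ ^ 2 + d₀ + 1 / Δ + 1, by positivity, ?_⟩
  set C : ℝ := 4 * K / Δ ^ 2 + d₀ + 1 / Δ + 1 with hCdef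
  intro d hd c x x' hxx'
  obtain ⟨k, hk0, hkp⟩ := hk d hd
  set ν : Measure (Fin d → ℝ) := Measure.pi fun _ => μ with hνdef
  have hdpos : (0 : ℝ) < d := by exact_mod_cast hd
  -- the classifier
  set A : Set (Fin d → ℝ) :=
    {z | (∑ i, (z i - x i) ^ 2) / (d : ℝ) ∈ Set.Icc (σ ^ 2 - k) (σ ^ 2 + k)} with hAdef
  have hA : MeasurableSet A := by
    have hmeas : Measurable fun z : Fin d → ℝ => (∑ i, (z i - x i) ^ 2) / (d : ℝ) := by
      apply Measurable.div_const
      exact Finset.measurable_sum _ fun i _ => ((measurable_pi_apply i).sub measurable_const).pow_const 2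
    exact hmeas measurableSet_Icc
  set f₀ : (Fin d → ℝ) → Bool := fun z => if z ∈ A then c else !c with hf₀def
  have hf₀m : Measurable f₀ := Measurable.ite hA measurable_const measurable_const
  have hfc : ∀ z, (f₀ z = c ↔ z ∈ A) := by
    intro z
    by_cases h : z ∈ A <;> simp [hf₀def, h]
  have hcon : ν {δ | f₀ (x + σ • δ) = c} = ENNReal.ofReal p := by
    have hset1 : {δ : Fin d → ℝ | f₀ (x + σ • δ) = c}
        = {δ | (σ ^ 2 * ∑ i, (δ i) ^ 2) / (d : ℝ) ∈ Set.Icc (σ ^ 2 - k) (σ ^ 2 + k)} := by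
      ext δ
      rw [Set.mem_setOf_eq, hfc]
      have hsum : ∑ i, ((x + σ • δ) i - x i) ^ 2 = σ ^ 2 * ∑ i, (δ i) ^ 2 := by
        rw [Finset.mul_sum]
        refine Finset.sum_congr rfl fun i _ => ?_
        simp only [Pi.add_apply, Pi.smul_apply, smul_eq_mul]
        ring
      simp only [hAdef, Set.mem_setOf_eq, hsum]
    rw [hset1]
    exact hkp
  refine le_trans (iInf_le _ ⟨f₀, hf₀m, hcon⟩) ?_
  -- the target event
  have hset2 : {δ : Fin d → ℝ | f₀ (x' + τ • δ) = c}
      = {δ | (∑ i, (x' i - x i + τ * δ i) ^ 2) / (d : ℝ)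
          ∈ Set.Icc (σ ^ 2 - k) (σ ^ 2 + k)} := by
    ext δ
    rw [Set.mem_setOf_eq, hfc]
    have hsum : ∑ i, ((x' + τ • δ) i - x i) ^ 2 = ∑ i, (x' i - x i + τ * δ i) ^ 2 := by
      refine Finset.sum_congr rfl fun i _ => ?_
      simp only [Pi.add_apply, Pi.smul_apply, smul_eq_mul]
      ring
    simp only [hAdef, Set.mem_setOf_eq, hsum]
  rw [hset2]
  set v : Fin d → ℝ := fun i => x' i - x i with hvdef
  have hW : ∑ i, v i ^ 2 ≤ 1 / 4 := by
    have hS0 : 0 ≤ ∑ i, (x i - x' i) ^ 2 := Finset.sum_nonneg fun i _ => sq_nonneg _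
    have h1 : ∑ i, (x i - x' i) ^ 2 ≤ ε ^ 2 := by
      have := Real.sqrt_le_sqrt (le_refl (∑ i, (x i - x' i) ^ 2))
      have h2 : Real.sqrt (∑ i, (x i - x' i) ^ 2) ^ 2 = ∑ i, (x i - x' i) ^ 2 :=
        Real.sq_sqrt hS0
      calc ∑ i, (x i - x' i) ^ 2 = Real.sqrt (∑ i, (x i - x' i) ^ 2) ^ 2 := h2.symm
        _ ≤ ε ^ 2 := pow_le_pow_left₀ (Real.sqrt_nonneg _) hxx' 2
    have h3 : ε ^ 2 ≤ 1 / 4 := by nlinarith [hε.1, hε.2]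
    have h4 : ∑ i, v i ^ 2 = ∑ i, (x i - x' i) ^ 2 := by
      refine Finset.sum_congr rfl fun i _ => ?_
      simp only [hvdef]; ring
    linarith
  have hW0 : 0 ≤ ∑ i, v i ^ 2 := Finset.sum_nonneg fun i _ => sq_nonneg _
  -- Step 1: bound on k (when d ≥ d₀)
  have hkbound : (d : ℝ) ≥ d₀ → k ≤ Δ / 4 := by
    intro hdd
    rcases eq_or_lt_of_le hk0 with hk0' | hkpos
    · rw [← hk0']; positivity
    -- Chebyshev for Y_Q = ∑ (δ i ^ 2 - 1)
    have hQ := pi_sum_sq_aux μ (fun _ : Fin d => fun t : ℝ => t ^ 2 - 1)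
      (fun _ => hg2int) (fun _ => hVint) (fun _ => hg20)
    have hQval : ∫ δ : Fin d → ℝ, (∑ i, ((δ i) ^ 2 - 1)) ^ 2 ∂ν = d * V := by
      rw [hQ.2]
      simp [Finset.sum_const, Finset.card_univ, nsmul_eq_mul]
      exact Or.inl rfl
    have hBc : {δ : Fin d → ℝ |
        (σ ^ 2 * ∑ i, (δ i) ^ 2) / (d : ℝ) ∈ Set.Icc (σ ^ 2 - k) (σ ^ 2 + k)}ᶜ
        ⊆ {δ | (d : ℝ) * k / σ ^ 2 ≤ |∑ i, ((δ i) ^ 2 - 1)|} := by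
      intro δ hδ
      simp only [Set.mem_compl_iff, Set.mem_setOf_eq, Set.mem_Icc, not_and_or, not_le] at hδ
      have hS : ∑ i, ((δ i) ^ 2 - 1) = (∑ i, (δ i) ^ 2) - d := by
        rw [Finset.sum_sub_distrib]
        simp [Finset.card_univ]
      set s : ℝ := ∑ i, (δ i) ^ 2 with hsdef
      rw [Set.mem_setOf_eq, hS]
      rcases hδ with h | h
      · -- σ² s / d < σ² − k
        rw [le_abs]; right
        rw [div_le_iff₀ (by positivity)]
        have h1 : σ ^ 2 * s < (σ ^ 2 - k) * d := (div_lt_iff₀ hdpos).mp h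
        have key : -(s - (d : ℝ)) * σ ^ 2 - (d : ℝ) * k
            = ((σ ^ 2 - k) * (d : ℝ) - σ ^ 2 * s) := by ring
        linarith
      · rw [le_abs]; left
        rw [div_le_iff₀ (by positivity)]
        have h1 : (σ ^ 2 + k) * d < σ ^ 2 * s := (lt_div_iff₀ hdpos).mp h
        have key : (s - (d : ℝ)) * σ ^ 2 - (d : ℝ) * k
            = (σ ^ 2 * s - (σ ^ 2 + k) * (d : ℝ)) := by ring
        linarith
    have hmB : MeasurableSet {δ : Fin d → ℝ |
        (σ ^ 2 * ∑ i, (δ i) ^ 2) / (d : ℝ) ∈ Set.Icc (σ ^ 2 - k) (σ ^ 2 + k)} := by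
      have hmeas : Measurable fun δ : Fin d → ℝ => (σ ^ 2 * ∑ i, (δ i) ^ 2) / (d : ℝ) := by
        apply Measurable.div_const
        apply Measurable.const_mul
        exact Finset.measurable_sum _ fun i _ => (measurable_pi_apply i).pow_const 2
      exact hmeas measurableSet_Icc
    have hcompl : ν {δ : Fin d → ℝ |
        (σ ^ 2 * ∑ i, (δ i) ^ 2) / (d : ℝ) ∈ Set.Icc (σ ^ 2 - k) (σ ^ 2 + k)}ᶜ
        = 1 - ENNReal.ofReal p := by
      rw [prob_compl_eq_one_sub hmB, hkp]
    have hc1 : ENNReal.ofReal (1 - p) = 1 - ENNReal.ofReal p := by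
      rw [← ENNReal.ofReal_one, ← ENNReal.ofReal_sub _ hppos.le]
    have htpos : (0 : ℝ) < (d : ℝ) * k / σ ^ 2 := by positivity
    have hcheb := cheb_aux ν (fun δ : Fin d → ℝ => ∑ i, ((δ i) ^ 2 - 1)) hQ.1 htpos
    rw [hQval] at hcheb
    have hchain : ENNReal.ofReal (1 - p)
        ≤ ENNReal.ofReal ((d : ℝ) * V / ((d : ℝ) * k / σ ^ 2) ^ 2) := by
      rw [hc1, ← hcompl]
      exact le_trans (measure_mono hBc) hcheb
    have hreal : 1 - p ≤ (d : ℝ) * V / ((d : ℝ) * k / σ ^ 2) ^ 2 :=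
      (ENNReal.ofReal_le_ofReal_iff (by positivity)).mp hchain
    have hks : k ^ 2 ≤ σ ^ 4 * V / ((1 - p) * d) := by
      have h2 : ((d : ℝ) * k / σ ^ 2) ^ 2 = (d : ℝ) ^ 2 * k ^ 2 / σ ^ 4 := by
        field_simp
      rw [h2, le_div_iff₀ (by positivity)] at hreal
      have h4 : (1 - p) * ((d : ℝ) ^ 2 * k ^ 2) ≤ (d : ℝ) * V * σ ^ 4 := by
        have hmul := mul_le_mul_of_nonneg_right hreal (by positivity : (0:ℝ) ≤ σ ^ 4)
        have e1 : (1 - p) * ((d : ℝ) ^ 2 * k ^ 2 / σ ^ 4) * σ ^ 4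
            = (1 - p) * ((d : ℝ) ^ 2 * k ^ 2) := by field_simp
        linarith
      rw [le_div_iff₀ (by positivity)]
      have h5 : k ^ 2 * ((1 - p) * (d : ℝ)) * (d : ℝ) ≤ σ ^ 4 * V * (d : ℝ) := by
        have e2 : k ^ 2 * ((1 - p) * (d : ℝ)) * (d : ℝ)
            = (1 - p) * ((d : ℝ) ^ 2 * k ^ 2) := by ring
        have e3 : σ ^ 4 * V * (d : ℝ) = (d : ℝ) * V * σ ^ 4 := by ring
        linarith
      exact le_of_mul_le_mul_right h5 hdpos
    have hks2 : k ^ 2 ≤ (Δ / 4) ^ 2 := by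
      have h5 : σ ^ 4 * V / ((1 - p) * d) ≤ (Δ / 4) ^ 2 := by
        rw [div_le_iff₀ (by positivity)]
        have h6 : d₀ * ((1 - p) * Δ ^ 2) = 16 * σ ^ 4 * V := by
          rw [hd₀def]; field_simp
        nlinarith [mul_le_mul_of_nonneg_right hdd (by positivity : (0:ℝ) ≤ (1 - p) * Δ ^ 2)]
      linarith
    calc k = Real.sqrt (k ^ 2) := (Real.sqrt_sq hk0).symm
      _ ≤ Real.sqrt ((Δ / 4) ^ 2) := Real.sqrt_le_sqrt hks2
      _ = Δ / 4 := Real.sqrt_sq (by positivity)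
  -- Step 2: Chebyshev for the shifted event
  set g : Fin d → ℝ → ℝ := fun i t => 2 * τ * v i * t + τ ^ 2 * (t ^ 2 - 1) with hgdef
  have hg1 : ∀ i, Integrable (g i) μ := by
    intro i
    refine (hpoly (-(τ ^ 2)) (2 * τ * v i) (τ ^ 2) 0 0).congr
      (Filter.Eventually.of_forall fun t => by simp only [hgdef]; ring)
  have hg2 : ∀ i, Integrable (fun t => g i t ^ 2) μ := by
    intro i
    refine (hpoly (τ ^ 4) (-(4 * τ ^ 3 * v i)) (4 * τ ^ 2 * v i ^ 2 - 2 * τ ^ 4)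
      (4 * τ ^ 3 * v i) (τ ^ 4)).congr
      (Filter.Eventually.of_forall fun t => by simp only [hgdef]; ring)
  have hg0 : ∀ i, ∫ t, g i t ∂μ = 0 := by
    intro i
    have h1 : (fun t : ℝ => g i t) = fun t : ℝ => -(τ ^ 2) + (2 * τ * v i) * t + τ ^ 2 * t ^ 2 :=
      funext fun t => by simp only [hgdef]; ring
    rw [h1, hquad]; ring
  have hg2bound : ∀ i, ∫ t, g i t ^ 2 ∂μ ≤ 8 * τ ^ 2 * v i ^ 2 + 2 * τ ^ 4 * V := by
    intro i
    have hRint : Integrable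
        (fun t : ℝ => 8 * τ ^ 2 * v i ^ 2 * t ^ 2 + 2 * τ ^ 4 * (t ^ 2 - 1) ^ 2) μ :=
      ((hpow 2 (by norm_num)).const_mul _).add (hVint.const_mul _)
    have hptw : ∀ t : ℝ, g i t ^ 2
        ≤ 8 * τ ^ 2 * v i ^ 2 * t ^ 2 + 2 * τ ^ 4 * (t ^ 2 - 1) ^ 2 := by
      intro t
      have := sq_nonneg (2 * τ * v i * t - τ ^ 2 * (t ^ 2 - 1))
      simp only [hgdef]
      nlinarith
    calc ∫ t, g i t ^ 2 ∂μ
        ≤ ∫ t, (8 * τ ^ 2 * v i ^ 2 * t ^ 2 + 2 * τ ^ 4 * (t ^ 2 - 1) ^ 2) ∂μ :=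
          integral_mono (hg2 i) hRint hptw
      _ = 8 * τ ^ 2 * v i ^ 2 * ∫ t, t ^ 2 ∂μ
          + 2 * τ ^ 4 * ∫ t, (t ^ 2 - 1) ^ 2 ∂μ := by
          rw [integral_add ((hpow 2 (by norm_num)).const_mul _) (hVint.const_mul _),
            integral_const_mul, integral_const_mul]
      _ = 8 * τ ^ 2 * v i ^ 2 + 2 * τ ^ 4 * V := by rw [hvar, hVdef]; ring
  have hY := pi_sum_sq_aux μ g hg1 hg2 hg0
  have hYval : ∫ δ : Fin d → ℝ, (∑ i, g i (δ i)) ^ 2 ∂ν ≤ K * d := by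
    rw [hY.2]
    calc ∑ i, ∫ t, g i t ^ 2 ∂μ
        ≤ ∑ i, (8 * τ ^ 2 * v i ^ 2 + 2 * τ ^ 4 * V) :=
          Finset.sum_le_sum fun i _ => hg2bound i
      _ = 8 * τ ^ 2 * (∑ i, v i ^ 2) + 2 * τ ^ 4 * V * d := by
          rw [Finset.sum_add_distrib, ← Finset.mul_sum]
          simp [Finset.sum_const, Finset.card_univ, nsmul_eq_mul]
          ring
      _ ≤ 8 * τ ^ 2 * (1 / 4) + 2 * τ ^ 4 * V * d := by
          have := mul_le_mul_of_nonneg_left hW (by positivity : (0:ℝ) ≤ 8 * τ ^ 2)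
          linarith
      _ ≤ K * d := by
          have hd1 : (1 : ℝ) ≤ (d : ℝ) := by exact_mod_cast hd
          have hnn : (0 : ℝ) ≤ 2 * τ ^ 2 * ((d : ℝ) - 1) :=
            mul_nonneg (by positivity) (by linarith)
          have hring : K * (d : ℝ) - (8 * τ ^ 2 * (1 / 4) + 2 * τ ^ 4 * V * (d : ℝ))
              = 2 * τ ^ 2 * ((d : ℝ) - 1) := by rw [hKdef]; ring
          linarith
  -- main case split
  by_cases hbig : d₀ ≤ (d : ℝ) ∧ 1 / Δ ≤ (d : ℝ)
  · -- large d: Chebyshev bound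
    have hkb := hkbound hbig.1
    have hdΔ : 1 ≤ (d : ℝ) * Δ := by
      have := hbig.2
      rw [div_le_iff₀ hΔpos] at this
      linarith [this]
    have hEsub : {δ : Fin d → ℝ | (∑ i, (x' i - x i + τ * δ i) ^ 2) / (d : ℝ)
          ∈ Set.Icc (σ ^ 2 - k) (σ ^ 2 + k)}
        ⊆ {δ | (d : ℝ) * Δ / 2 ≤ |∑ i, g i (δ i)|} := by
      intro δ hδ
      simp only [Set.mem_setOf_eq, Set.mem_Icc] at hδ
      set W : ℝ := ∑ i, v i ^ 2 with hWdef2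
      set Y : ℝ := ∑ i, g i (δ i) with hYdef2
      have hexp : ∑ i, (x' i - x i + τ * δ i) ^ 2 = W + τ ^ 2 * d + Y := by
        have hterm : ∀ i : Fin d, (x' i - x i + τ * δ i) ^ 2
            = v i ^ 2 + τ ^ 2 + g i (δ i) := by
          intro i
          simp only [hgdef, hvdef]
          ring
        rw [Finset.sum_congr rfl fun i _ => hterm i, Finset.sum_add_distrib,
          Finset.sum_add_distrib]
        simp only [Finset.sum_const, Finset.card_univ, Fintype.card_fin, nsmul_eq_mul]
        rw [hWdef2, hYdef2]
        ring
      rw [hexp] at hδ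
      have h1 : (σ ^ 2 - k) * (d : ℝ) ≤ W + τ ^ 2 * d + Y := (le_div_iff₀ hdpos).mp hδ.1
      have h2 : W + τ ^ 2 * d + Y ≤ (σ ^ 2 + k) * (d : ℝ) := (div_le_iff₀ hdpos).mp hδ.2
      have hkd : k * (d : ℝ) ≤ (Δ / 4) * (d : ℝ) :=
        mul_le_mul_of_nonneg_right hkb hdpos.le
      rw [Set.mem_setOf_eq]
      rcases le_or_gt (τ ^ 2) (σ ^ 2) with hc | hc
      · have hΔd : Δ * (d : ℝ) = σ ^ 2 * (d : ℝ) - τ ^ 2 * (d : ℝ) := by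
          rw [hΔdef, abs_of_nonneg (by linarith : (0:ℝ) ≤ σ ^ 2 - τ ^ 2)]; ring
        rw [le_abs]; left
        have hr1 : (σ ^ 2 - k) * (d : ℝ) = σ ^ 2 * (d : ℝ) - k * (d : ℝ) := by ring
        rw [hr1] at h1
        linarith [hW, hdΔ, mul_comm (d : ℝ) Δ]
      · have hΔd : Δ * (d : ℝ) = τ ^ 2 * (d : ℝ) - σ ^ 2 * (d : ℝ) := by
          rw [hΔdef, abs_of_neg (by linarith : σ ^ 2 - τ ^ 2 < 0)]; ring
        rw [le_abs]; right
        have hr2 : (σ ^ 2 + k) * (d : ℝ) = σ ^ 2 * (d : ℝ) + k * (d : ℝ) := by ring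
        rw [hr2] at h2
        have hW0' : 0 ≤ W := hW0
        linarith [hdΔ, mul_comm (d : ℝ) Δ]
    have htpos : (0 : ℝ) < (d : ℝ) * Δ / 2 := by positivity
    have hcheb := cheb_aux ν (fun δ : Fin d → ℝ => ∑ i, g i (δ i)) hY.1 htpos
    have hC4 : 4 * K / Δ ^ 2 ≤ C := by
      rw [hCdef]
      have h1Δ : 0 ≤ 1 / Δ := by positivity
      linarith
    have harith : (∫ δ : Fin d → ℝ, (∑ i, g i (δ i)) ^ 2 ∂ν) / ((d : ℝ) * Δ / 2) ^ 2
        ≤ C / (d : ℝ) := by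
      have hstep1 : (∫ δ : Fin d → ℝ, (∑ i, g i (δ i)) ^ 2 ∂ν) / ((d : ℝ) * Δ / 2) ^ 2
          ≤ K * d / ((d : ℝ) * Δ / 2) ^ 2 := by
        gcongr
      refine le_trans hstep1 ?_
      rw [div_le_div_iff₀ (by positivity) hdpos]
      have hkey : (4 * K / Δ ^ 2) * (((d : ℝ) * Δ / 2) ^ 2) = K * (d : ℝ) ^ 2 := by
        field_simp
        ring
      have hmul := mul_le_mul_of_nonneg_right hC4
        (by positivity : (0:ℝ) ≤ ((d : ℝ) * Δ / 2) ^ 2)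
      have hr : K * (d : ℝ) * (d : ℝ) = K * (d : ℝ) ^ 2 := by ring
      calc K * (d : ℝ) * (d : ℝ) = K * (d : ℝ) ^ 2 := hr
        _ = (4 * K / Δ ^ 2) * (((d : ℝ) * Δ / 2) ^ 2) := hkey.symm
        _ ≤ C * (((d : ℝ) * Δ / 2) ^ 2) := hmul
    calc ν {δ : Fin d → ℝ | (∑ i, (x' i - x i + τ * δ i) ^ 2) / (d : ℝ)
          ∈ Set.Icc (σ ^ 2 - k) (σ ^ 2 + k)}
        ≤ ν {δ | (d : ℝ) * Δ / 2 ≤ |∑ i, g i (δ i)|} := measure_mono hEsub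
      _ ≤ ENNReal.ofReal ((∫ δ : Fin d → ℝ, (∑ i, g i (δ i)) ^ 2 ∂ν)
            / ((d : ℝ) * Δ / 2) ^ 2) := hcheb
      _ ≤ ENNReal.ofReal (C / (d : ℝ)) := ENNReal.ofReal_le_ofReal harith
  · -- small d: trivial bound since C/d ≥ 1
    push_neg at hbig
    have hdC : (d : ℝ) ≤ C - 1 := by
      rcases le_or_gt d₀ (d : ℝ) with h | h
      · have := hbig h
        rw [hCdef]
        have h4K : 0 ≤ 4 * K / Δ ^ 2 := by positivity
        linarith
      · rw [hCdef]
        have h1Δ : 0 ≤ 1 / Δ := by positivity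
        have h4K : 0 ≤ 4 * K / Δ ^ 2 := by positivity
        linarith
    have hC1 : 1 ≤ C / (d : ℝ) := by
      rw [le_div_iff₀ hdpos]
      linarith
    refine le_trans prob_le_one ?_
    calc (1 : ENNReal) = ENNReal.ofReal 1 := by simp
      _ ≤ ENNReal.ofReal (C / (d : ℝ)) := ENNReal.ofReal_le_ofReal hC1
end

section
/- Let p ∈ (1/2, 1), σ, τ > 0 with σ ≠ τ, and ε ∈ (0, 1/2]. Assume that for every dimension d ≥ 1 there exists k ≥ 0 with ℙ(‖σδ‖₂²/d ∈ [σ² − k, σ² + k]) = p. Then there exists a constant C > 0, depending only on p, σ, τ, ε and m₄, such that for every d ≥ 1 and every z ∈ ℝ^d with ‖z‖₂ ≤ ε, the infimum of ℙ(τδ + z ∈ U), taken over all Borel sets U ⊆ ℝ^d satisfying ℙ(σδ ∈ U) = p, is at most C/d. -/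
open MeasureTheory

namespace CurseAux

variable {μ : Measure ℝ} [IsProbabilityMeasure μ]

lemma map_eval (d : ℕ) (i : Fin d) :
    Measure.map (fun x : Fin d → ℝ => x i) (Measure.pi fun _ : Fin d => μ) = μ := by
  ext s hs
  rw [Measure.map_apply (measurable_pi_apply i) hs]
  have h : (fun x : Fin d → ℝ => x i) ⁻¹' s
      = Set.pi Set.univ (Function.update (fun _ : Fin d => (Set.univ : Set ℝ)) i s) := by
    rw [Set.univ_pi_update_univ]
  rw [h, Measure.pi_pi]
  rw [Fintype.prod_eq_single i (fun j hj => by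
    rw [Function.update_of_ne hj]; exact measure_univ)]
  rw [Function.update_self]

lemma integral_eval {d : ℕ} (i : Fin d) {g : ℝ → ℝ} (hgm : AEStronglyMeasurable g μ) :
    ∫ x : Fin d → ℝ, g (x i) ∂(Measure.pi fun _ : Fin d => μ) = ∫ t, g t ∂μ := by
  have h := integral_map (μ := Measure.pi fun _ : Fin d => μ)
    (φ := fun x : Fin d → ℝ => x i) (measurable_pi_apply i).aemeasurable (f := g)
    (by rw [map_eval (μ := μ) d i]; exact hgm)
  rw [map_eval (μ := μ) d i] at h
  exact h.symm

lemma integrable_eval {d : ℕ} (i : Fin d) {g : ℝ → ℝ} (hgm : AEStronglyMeasurable g μ)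
    (hg : Integrable g μ) :
    Integrable (fun x : Fin d → ℝ => g (x i)) (Measure.pi fun _ : Fin d => μ) := by
  have h := (integrable_map_measure (f := fun x : Fin d → ℝ => x i) (g := g)
    (by rw [map_eval (μ := μ) d i]; exact hgm) (measurable_pi_apply i).aemeasurable).mp
    (by rw [map_eval (μ := μ) d i]; exact hg)
  simpa [Function.comp_def] using h

lemma memℒp_eval {d : ℕ} (i : Fin d) {g : ℝ → ℝ} (hgm : Measurable g)
    (hg : MemLp g 2 μ) :
    MemLp (fun x : Fin d → ℝ => g (x i)) 2 (Measure.pi fun _ : Fin d => μ) := by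
  have h := (memLp_map_measure_iff (f := fun x : Fin d → ℝ => x i) (g := g)
    hgm.aestronglyMeasurable (measurable_pi_apply i).aemeasurable).mp
    (by rw [map_eval (μ := μ) d i]; exact hg)
  simpa [Function.comp_def] using h

open ProbabilityTheory

lemma pair_mul {d : ℕ} {i j : Fin d} (hij : i ≠ j) {gi gj : ℝ → ℝ}
    (hgi : Integrable gi μ) (hgj : Integrable gj μ) :
    Integrable (fun x : Fin d → ℝ => gi (x i) * gj (x j)) (Measure.pi fun _ : Fin d => μ) ∧
    ∫ x : Fin d → ℝ, gi (x i) * gj (x j) ∂(Measure.pi fun _ : Fin d => μ)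
      = (∫ t, gi t ∂μ) * ∫ t, gj t ∂μ := by
  classical
  letI : MeasureSpace ℝ := ⟨μ⟩
  haveI : SigmaFinite (volume : Measure ℝ) := inferInstanceAs (SigmaFinite μ)
  set F : Fin d → ℝ → ℝ := fun k => if k = i then gi else if k = j then gj else fun _ => 1
    with hF
  have hFint : ∀ k, Integrable (F k) μ := by
    intro k
    by_cases h1 : k = i
    · simpa [hF, h1] using hgi
    · by_cases h2 : k = j
      · simpa [hF, h1, h2, Ne.symm hij] using hgj
      · simpa [hF, h1, h2] using (integrable_const (1 : ℝ) (μ := μ))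
  have hprod : ∀ x : Fin d → ℝ, (∏ k, F k (x k)) = gi (x i) * gj (x j) := by
    intro x
    rw [← Finset.prod_subset (Finset.subset_univ ({i, j} : Finset (Fin d)))
      (fun k _ hk => by
        simp only [Finset.mem_insert, Finset.mem_singleton, not_or] at hk
        simp [hF, hk.1, hk.2])]
    rw [Finset.prod_pair hij]
    simp [hF, hij, Ne.symm hij]
  have hint : Integrable (fun x : Fin d → ℝ => ∏ k, F k (x k))
      (Measure.pi fun _ : Fin d => μ) :=
    Integrable.fintype_prod (𝕜 := ℝ) (f := F) hFint
  have hval : ∫ x : Fin d → ℝ, (∏ k, F k (x k)) ∂(Measure.pi fun _ : Fin d => μ)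
      = ∏ k, ∫ t, F k t ∂μ :=
    integral_fintype_prod_eq_prod (𝕜 := ℝ) F
  have hprodval : (∏ k, ∫ t, F k t ∂μ) = (∫ t, gi t ∂μ) * ∫ t, gj t ∂μ := by
    rw [← Finset.prod_subset (Finset.subset_univ ({i, j} : Finset (Fin d)))
      (fun k _ hk => by
        simp only [Finset.mem_insert, Finset.mem_singleton, not_or] at hk
        simp [hF, hk.1, hk.2])]
    rw [Finset.prod_pair hij]
    simp [hF, hij, Ne.symm hij]
  constructor
  · refine hint.congr ?_
    exact Filter.Eventually.of_forall hprod
  · rw [← hprodval, ← hval]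
    exact integral_congr_ae (Filter.Eventually.of_forall fun x => (hprod x).symm)

lemma chebyshev_pi {d : ℕ} (g : Fin d → ℝ → ℝ)
    (hgm : ∀ i, Measurable (g i))
    (hg2 : ∀ i, Integrable (fun t => (g i t) ^ 2) μ)
    (hg0 : ∀ i, ∫ t, g i t ∂μ = 0)
    {c : ℝ} (hc : 0 < c) :
    (Measure.pi fun _ : Fin d => μ) {x | c ≤ |∑ i, g i (x i)|}
      ≤ ENNReal.ofReal ((∑ i, ∫ t, (g i t) ^ 2 ∂μ) / c ^ 2) := by
  classical
  set ν := (Measure.pi fun _ : Fin d => μ) with hν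
  have hg1 : ∀ i, Integrable (g i) μ := by
    intro i
    refine Integrable.mono' ((integrable_const (1:ℝ)).add (hg2 i))
      (hgm i).aestronglyMeasurable ?_
    filter_upwards with t
    have h1 : |g i t| ≤ 1 + (g i t) ^ 2 := by nlinarith [sq_nonneg (|g i t| - 1), sq_abs (g i t)]
    simpa using h1
  have hMem : ∀ i, MemLp (fun x : Fin d → ℝ => g i (x i)) 2 ν := by
    intro i
    exact memℒp_eval i (hgm i)
      ((memLp_two_iff_integrable_sq (hgm i).aestronglyMeasurable).2 (hg2 i))
  have hInt1 : ∀ i, Integrable (fun x : Fin d → ℝ => g i (x i)) ν :=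
    fun i => (hMem i).integrable one_le_two
  set Y : (Fin d → ℝ) → ℝ := fun x => ∑ i, g i (x i) with hY
  have hYMem : MemLp Y 2 ν := by
    have h := memLp_finsetSum' (μ := ν) Finset.univ (fun i (_ : i ∈ Finset.univ) => hMem i)
    have he : (∑ i : Fin d, fun x : Fin d → ℝ => g i (x i)) = Y := by
      funext x; simp [hY]
    rwa [he] at h
  have hEY : ∫ x, Y x ∂ν = 0 := by
    rw [hY]
    rw [integral_finset_sum Finset.univ (fun i _ => hInt1 i)]
    refine Finset.sum_eq_zero fun i _ => ?_
    rw [integral_eval i (hgm i).aestronglyMeasurable, hg0 i]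
  have hpair : ∀ i j : Fin d, Integrable (fun x : Fin d → ℝ => g i (x i) * g j (x j)) ν := by
    intro i j
    by_cases h : i = j
    · subst h
      have h2 : Integrable (fun t => g i t * g i t) μ := by
        have := hg2 i; simpa [sq] using this
      have := integrable_eval (μ := μ) i ((hgm i).mul (hgm i)).aestronglyMeasurable h2
      simpa using this
    · exact (pair_mul h (hg1 i) (hg1 j)).1
  have hEY2 : ∫ x, (Y x) ^ 2 ∂ν = ∑ i, ∫ t, (g i t) ^ 2 ∂μ := by
    have hsq : ∀ x : Fin d → ℝ, (Y x) ^ 2 = ∑ i, ∑ j, g i (x i) * g j (x j) := by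
      intro x; rw [hY, sq, Finset.sum_mul_sum]
    simp_rw [hsq]
    rw [integral_finset_sum _ (fun i _ => integrable_finset_sum _ (fun j _ => hpair i j))]
    refine Finset.sum_congr rfl fun i _ => ?_
    rw [integral_finset_sum _ (fun j _ => hpair i j)]
    rw [Finset.sum_eq_single i]
    · have h2 : Integrable (fun t => g i t * g i t) μ := by
        have := hg2 i; simpa [sq] using this
      have := integral_eval (μ := μ) i ((hgm i).mul (hgm i)).aestronglyMeasurable
      rw [show (∫ x : Fin d → ℝ, g i (x i) * g i (x i) ∂ν) = ∫ t, g i t * g i t ∂μ from this]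
      simp [sq]
    · intro j _ hji
      rw [(pair_mul (Ne.symm hji) (hg1 i) (hg1 j)).2, hg0 i, zero_mul]
    · intro h; exact absurd (Finset.mem_univ i) h
  have hvar : variance Y ν = ∑ i, ∫ t, (g i t) ^ 2 ∂μ := by
    rw [variance_eq_sub hYMem]
    have h1 : ν[Y] = 0 := hEY
    have h2 : ν[Y ^ 2] = ∑ i, ∫ t, (g i t) ^ 2 ∂μ := by
      rw [← hEY2]; congr 1
    rw [h1, h2]; ring
  have hcheb := meas_ge_le_variance_div_sq (μ := ν) hYMem hc
  have hset : {x | c ≤ |∑ i, g i (x i)|} = {ω | c ≤ |Y ω - ν[Y]|} := by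
    ext x
    simp only [Set.mem_setOf_eq]; rw [hEY, sub_zero]
  rw [hset, hvar] at *
  exact hcheb

lemma poly_facts (μ : Measure ℝ) [IsProbabilityMeasure μ]
    (hint : Integrable (fun t : ℝ => t ^ 4) μ) :
    Integrable (fun t : ℝ => t) μ ∧ Integrable (fun t : ℝ => t ^ 2) μ ∧
      Integrable (fun t : ℝ => t ^ 3) μ := by
  have hbase : Integrable (fun t : ℝ => 1 + t ^ 4) μ := (integrable_const 1).add hint
  refine ⟨?_, ?_, ?_⟩
  · refine Integrable.mono' hbase measurable_id.aestronglyMeasurable ?_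
    filter_upwards with t
    have h4 : (0:ℝ) ≤ t ^ 4 := by positivity
    have : |t| ≤ 1 + t ^ 4 := by
      nlinarith [sq_nonneg (|t| - 1), sq_nonneg (|t|^2 - 1), sq_abs t, abs_nonneg t,
        sq_nonneg (|t|^2 - |t|)]
    simpa using this
  · refine Integrable.mono' hbase (measurable_id.pow_const 2).aestronglyMeasurable ?_
    filter_upwards with t
    have : |t ^ 2| ≤ 1 + t ^ 4 := by
      rw [abs_of_nonneg (by positivity)]
      nlinarith [sq_nonneg (t^2 - 1)]
    simpa using this
  · refine Integrable.mono' hbase (measurable_id.pow_const 3).aestronglyMeasurable ?_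
    filter_upwards with t
    have : |t ^ 3| ≤ 1 + t ^ 4 := by
      have h1 : |t ^ 3| = |t|^3 := by rw [abs_pow]
      have h2 : t ^ 4 = |t|^4 := by rw [← abs_pow]; rw [abs_of_nonneg (by positivity)]
      rw [h1, h2]
      nlinarith [sq_nonneg (|t|^2 - |t|), abs_nonneg t, sq_nonneg (|t| - 1), sq_nonneg (|t|^2-1)]
    simpa using this

lemma integrable_poly4 (μ : Measure ℝ) [IsProbabilityMeasure μ]
    (hint : Integrable (fun t : ℝ => t ^ 4) μ)
    (c0 c1 c2 c3 c4 : ℝ) :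
    Integrable (fun t : ℝ => c0 + c1 * t + c2 * t ^ 2 + c3 * t ^ 3 + c4 * t ^ 4) μ := by
  obtain ⟨h1, h2, h3⟩ := poly_facts μ hint
  exact ((((integrable_const c0).add (h1.const_mul c1)).add (h2.const_mul c2)).add
    (h3.const_mul c3)).add (hint.const_mul c4)

lemma integral_centered_sq (μ : Measure ℝ) [IsProbabilityMeasure μ] {f : ℝ → ℝ}
    (h1 : Integrable f μ) (h2 : Integrable (fun t => f t ^ 2) μ) :
    ∫ t, (f t - ∫ s, f s ∂μ) ^ 2 ∂μ = ∫ t, f t ^ 2 ∂μ - (∫ t, f t ∂μ) ^ 2 := by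
  set m := ∫ s, f s ∂μ with hm
  have hexp : ∀ t : ℝ, (f t - m) ^ 2 = f t ^ 2 - (2 * m) * f t + m ^ 2 := by intro t; ring
  simp_rw [hexp]
  have ha : Integrable (fun t => f t ^ 2 - 2 * m * f t) μ := h2.sub (h1.const_mul (2 * m))
  have hb : Integrable (fun t => 2 * m * f t) μ := h1.const_mul (2 * m)
  rw [integral_add ha (integrable_const _), integral_sub h2 hb, MeasureTheory.integral_const_mul,
    integral_const]
  simp only [measure_univ, ENNReal.toReal_one, probReal_univ, smul_eq_mul, one_mul, mul_one]
  rw [← hm]; ring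

end CurseAux

set_option maxHeartbeats 1600000 in
/-- Measurable-set reformulation of Theorem 1. `δ : Fin d → ℝ` has law `μ^⊗d` with `μ` of
zero mean, unit variance and fourth moment `m₄`. Let `p ∈ (1/2, 1)`, `σ, τ > 0` with `σ ≠ τ`,
`ε ∈ (0, 1/2]`. Assume for every `d ≥ 1` there is `k ≥ 0` with
`ℙ(‖σδ‖₂²/d ∈ [σ² − k, σ² + k]) = p`. Then there is `C > 0` such that for every `d ≥ 1` and
every `z` with `‖z‖₂ ≤ ε`, the infimum over Borel sets `U` with `ℙ(σδ ∈ U) = p` of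
`ℙ(τδ + z ∈ U)` is at most `C/d`. -/
theorem curse_of_dimensionality_measurable_set_version
    (μ : Measure ℝ) [IsProbabilityMeasure μ]
    (hmean : ∫ t, t ∂μ = 0) (hvar : ∫ t, t ^ 2 ∂μ = 1)
    (hint : Integrable (fun t : ℝ => t ^ 4) μ)
    (m₄ : ℝ) (hm₄ : ∫ t, t ^ 4 ∂μ = m₄)
    (p σ τ ε : ℝ)
    (hp : p ∈ Set.Ioo (1 / 2 : ℝ) 1) (hσ : 0 < σ) (hτ : 0 < τ) (hστ : σ ≠ τ)
    (hε : ε ∈ Set.Ioc (0 : ℝ) (1 / 2))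
    (hk : ∀ d : ℕ, 1 ≤ d → ∃ k : ℝ, 0 ≤ k ∧
      (Measure.pi fun _ : Fin d => μ)
        {δ | (σ ^ 2 * ∑ i, (δ i) ^ 2) / (d : ℝ) ∈ Set.Icc (σ ^ 2 - k) (σ ^ 2 + k)}
        = ENNReal.ofReal p) :
    ∃ C : ℝ, 0 < C ∧ ∀ d : ℕ, 1 ≤ d → ∀ z : Fin d → ℝ,
      Real.sqrt (∑ i, (z i) ^ 2) ≤ ε →
      (⨅ U : {U : Set (Fin d → ℝ) // MeasurableSet U ∧
            (Measure.pi fun _ : Fin d => μ) {δ | σ • δ ∈ U} = ENNReal.ofReal p},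
          (Measure.pi fun _ : Fin d => μ) {δ | τ • δ + z ∈ U.1})
        ≤ ENNReal.ofReal (C / (d : ℝ)) := by
  classical
  obtain ⟨hp1, hp2⟩ := hp
  obtain ⟨hε1, hε2⟩ := hε
  obtain ⟨hμ1, hμ2, hμ3⟩ := CurseAux.poly_facts μ hint
  -- value of ∫ (t²-1)²
  have hc2 : ∫ t, (t ^ 2 - 1) ^ 2 ∂μ = m₄ - 1 := by
    have hexp : (fun t : ℝ => (t ^ 2 - 1) ^ 2) = fun t => (t ^ 4 - 2 * t ^ 2) + 1 :=
      funext fun t => by ring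
    rw [hexp]
    have ha : Integrable (fun t : ℝ => t ^ 4 - 2 * t ^ 2) μ := hint.sub (hμ2.const_mul 2)
    have hb : Integrable (fun t : ℝ => 2 * t ^ 2) μ := hμ2.const_mul 2
    rw [integral_add ha (integrable_const 1), integral_sub hint hb,
      MeasureTheory.integral_const_mul, hvar, hm₄, integral_const]
    simp
    ring
  have hm41 : 1 ≤ m₄ := by
    have hnn : 0 ≤ ∫ t, (t ^ 2 - 1) ^ 2 ∂μ := integral_nonneg fun t => sq_nonneg _
    linarith [hc2 ▸ hnn]
  have hσ2τ2 : σ ^ 2 ≠ τ ^ 2 := by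
    intro h
    exact hστ (by rw [← Real.sqrt_sq hσ.le, ← Real.sqrt_sq hτ.le, h])
  set gap : ℝ := |σ ^ 2 - τ ^ 2| with hgapdef
  have hgap0 : 0 < gap := abs_pos.mpr (sub_ne_zero.mpr hσ2τ2)
  set V1 : ℝ := σ ^ 4 * (m₄ - 1) with hV1def
  have hV10 : 0 ≤ V1 := mul_nonneg (by positivity) (by linarith)
  set A : ℝ := 8 * τ ^ 4 * m₄ + 8 with hAdef
  have hA0 : 0 < A := by
    have h8 : (0:ℝ) ≤ 8 * τ ^ 4 * m₄ :=
      mul_nonneg (mul_nonneg (by norm_num) (pow_pos hτ 4).le) (by linarith)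
    simp only [hAdef]; linarith only [h8]
  set D : ℝ := max (16 * V1 / ((1 - p) * gap ^ 2)) (1 / gap) with hDdef
  have hD0 : 0 ≤ D := le_trans (by positivity) (le_max_right _ _)
  set C : ℝ := max (D + 1) (4 * A / gap ^ 2) + 1 with hCdef
  have hC0 : 0 < C := by
    have h := le_max_left (D + 1) (4 * A / gap ^ 2)
    simp only [hCdef]; linarith
  refine ⟨C, hC0, ?_⟩
  intro d hd z hz
  have hd1 : (1 : ℝ) ≤ (d : ℝ) := by exact_mod_cast hd
  have hd0 : (0 : ℝ) < (d : ℝ) := by linarith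
  obtain ⟨k, hk0, hkp⟩ := hk d hd
  haveI : IsProbabilityMeasure (Measure.pi fun _ : Fin d => μ) := by infer_instance
  -- the witness set U₀
  have hstat : Measurable (fun u : Fin d → ℝ => (∑ i, (u i) ^ 2) / (d : ℝ)) :=
    (Finset.measurable_sum _ fun i _ => (measurable_pi_apply i).pow_const 2).div_const _
  set U₀ : Set (Fin d → ℝ) :=
    (fun u : Fin d → ℝ => (∑ i, (u i) ^ 2) / (d : ℝ)) ⁻¹'
      (Set.Icc (σ ^ 2 - k) (σ ^ 2 + k)) with hU₀def
  have hU₀meas : MeasurableSet U₀ := hstat measurableSet_Icc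
  have hU₀σ : {δ : Fin d → ℝ | σ • δ ∈ U₀}
      = {δ : Fin d → ℝ | (σ ^ 2 * ∑ i, (δ i) ^ 2) / (d : ℝ)
          ∈ Set.Icc (σ ^ 2 - k) (σ ^ 2 + k)} := by
    ext δ
    simp only [hU₀def, Set.mem_setOf_eq, Set.mem_preimage, Pi.smul_apply, smul_eq_mul]
    rw [show (∑ i, (σ * δ i) ^ 2) = σ ^ 2 * ∑ i, (δ i) ^ 2 by
      rw [Finset.mul_sum]; exact Finset.sum_congr rfl fun i _ => by ring]
  have hU₀p : (Measure.pi fun _ : Fin d => μ) {δ | σ • δ ∈ U₀} = ENNReal.ofReal p := by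
    rw [hU₀σ]; exact hkp
  refine le_trans (iInf_le _ ⟨U₀, hU₀meas, hU₀p⟩) ?_
  by_cases hcase : (d : ℝ) ≤ D
  · -- small d : bound by 1
    refine le_trans prob_le_one ?_
    rw [show (1 : ENNReal) = ENNReal.ofReal 1 by simp]
    apply ENNReal.ofReal_le_ofReal
    rw [le_div_iff₀ hd0]
    have h := le_max_left (D + 1) (4 * A / gap ^ 2)
    simp only [hCdef]
    linarith only [h, hcase, hd1]
  push_neg at hcase
  -- step 1 : k ≤ gap / 4
  have hmeas2 : MeasurableSet {δ : Fin d → ℝ | (σ ^ 2 * ∑ i, (δ i) ^ 2) / (d : ℝ)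
      ∈ Set.Icc (σ ^ 2 - k) (σ ^ 2 + k)} := by
    rw [← hU₀σ]
    exact (measurable_const_smul σ) hU₀meas
  have hkgap : k ≤ gap / 4 := by
    by_contra hk4
    push_neg at hk4
    set gσ : Fin d → ℝ → ℝ := fun _ t => σ ^ 2 * (t ^ 2 - 1) with hgσdef
    have hgσm : ∀ i, Measurable (gσ i) := fun i =>
      ((measurable_id.pow_const 2).sub measurable_const).const_mul _
    have hgσ2 : ∀ i : Fin d, Integrable (fun t => (gσ i t) ^ 2) μ := by
      intro i
      have he : (fun t : ℝ => (σ ^ 2 * (t ^ 2 - 1)) ^ 2)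
          = fun t => σ ^ 4 + 0 * t + (-(2 * σ ^ 4)) * t ^ 2 + 0 * t ^ 3 + σ ^ 4 * t ^ 4 :=
        funext fun t => by ring
      simpa only [hgσdef, he] using CurseAux.integrable_poly4 μ hint _ _ _ _ _
    have hgσ0 : ∀ i : Fin d, ∫ t, gσ i t ∂μ = 0 := by
      intro i
      simp only [hgσdef]
      rw [MeasureTheory.integral_const_mul, integral_sub hμ2 (integrable_const 1), hvar,
        integral_const]
      simp
    have hgσ2val : ∀ i : Fin d, ∫ t, (gσ i t) ^ 2 ∂μ = V1 := by
      intro i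
      have he : (fun t : ℝ => (gσ i t) ^ 2) = fun t => σ ^ 4 * ((t ^ 2 - 1) ^ 2) :=
        funext fun t => by simp only [hgσdef]; ring
      rw [he, MeasureTheory.integral_const_mul, hc2, hV1def]
    have hcheb := CurseAux.chebyshev_pi (μ := μ) gσ hgσm hgσ2 hgσ0
      (c := (d : ℝ) * gap / 4) (by positivity)
    have hsumval : (∑ _i : Fin d, V1) = (d : ℝ) * V1 := by
      rw [Finset.sum_const, Finset.card_univ, Fintype.card_fin, nsmul_eq_mul]
    have hsubset : {δ : Fin d → ℝ | (σ ^ 2 * ∑ i, (δ i) ^ 2) / (d : ℝ)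
        ∈ Set.Icc (σ ^ 2 - k) (σ ^ 2 + k)}ᶜ
        ⊆ {x : Fin d → ℝ | (d : ℝ) * gap / 4 ≤ |∑ i, gσ i (x i)|} := by
      intro x hx
      simp only [Set.mem_compl_iff, Set.mem_setOf_eq, Set.mem_Icc, not_and_or, not_le] at hx
      have hsum : ∑ i, gσ i (x i) = σ ^ 2 * (∑ i, (x i) ^ 2) - (d : ℝ) * σ ^ 2 := by
        simp only [hgσdef]
        rw [show (∑ i, σ ^ 2 * ((x i) ^ 2 - 1)) = ∑ i, (σ ^ 2 * (x i) ^ 2 - σ ^ 2) from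
          Finset.sum_congr rfl fun i _ => by ring]
        rw [Finset.sum_sub_distrib, Finset.sum_const, Finset.card_univ, Fintype.card_fin,
          nsmul_eq_mul, ← Finset.mul_sum]
      rw [Set.mem_setOf_eq, hsum]
      have hdk : (d : ℝ) * gap / 4 ≤ (d : ℝ) * k := by
        have h := mul_le_mul_of_nonneg_left hk4.le hd0.le
        linarith only [h]
      rcases hx with h | h
      · rw [div_lt_iff₀ hd0] at h
        have h1 : σ ^ 2 * (∑ i, (x i) ^ 2) - (d : ℝ) * σ ^ 2 < -((d : ℝ) * k) := by
          linarith only [h]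
        calc (d : ℝ) * gap / 4 ≤ (d : ℝ) * k := hdk
          _ ≤ -(σ ^ 2 * (∑ i, (x i) ^ 2) - (d : ℝ) * σ ^ 2) := by linarith only [h1]
          _ ≤ |σ ^ 2 * (∑ i, (x i) ^ 2) - (d : ℝ) * σ ^ 2| := neg_le_abs _
      · rw [lt_div_iff₀ hd0] at h
        have h1 : (d : ℝ) * k < σ ^ 2 * (∑ i, (x i) ^ 2) - (d : ℝ) * σ ^ 2 := by
          linarith only [h]
        calc (d : ℝ) * gap / 4 ≤ (d : ℝ) * k := hdk
          _ ≤ σ ^ 2 * (∑ i, (x i) ^ 2) - (d : ℝ) * σ ^ 2 := by linarith only [h1]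
          _ ≤ |σ ^ 2 * (∑ i, (x i) ^ 2) - (d : ℝ) * σ ^ 2| := le_abs_self _
    have hcompl : (Measure.pi fun _ : Fin d => μ)
        ({δ : Fin d → ℝ | (σ ^ 2 * ∑ i, (δ i) ^ 2) / (d : ℝ)
          ∈ Set.Icc (σ ^ 2 - k) (σ ^ 2 + k)}ᶜ) = ENNReal.ofReal (1 - p) := by
      rw [measure_compl hmeas2 (measure_ne_top _ _), hkp, measure_univ]
      rw [← ENNReal.ofReal_one, ← ENNReal.ofReal_sub _ (by linarith : (0:ℝ) ≤ p)]
    have hchain : ENNReal.ofReal (1 - p)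
        ≤ ENNReal.ofReal ((d : ℝ) * V1 / ((d : ℝ) * gap / 4) ^ 2) := by
      rw [← hcompl]
      refine le_trans (measure_mono hsubset) ?_
      refine le_trans hcheb ?_
      apply ENNReal.ofReal_le_ofReal
      rw [show (∑ i : Fin d, ∫ t, (gσ i t) ^ 2 ∂μ) = (d : ℝ) * V1 by
        rw [Finset.sum_congr rfl fun i _ => hgσ2val i, hsumval]]
    have hreal : 1 - p ≤ (d : ℝ) * V1 / ((d : ℝ) * gap / 4) ^ 2 := by
      rw [ENNReal.ofReal_le_ofReal_iff (by positivity)] at hchain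
      exact hchain
    have hid : (d : ℝ) * V1 / ((d : ℝ) * gap / 4) ^ 2 = 16 * V1 / ((d : ℝ) * gap ^ 2) := by
      field_simp
      ring
    have hlt : 16 * V1 / ((1 - p) * gap ^ 2) < (d : ℝ) :=
      lt_of_le_of_lt (le_max_left _ _) hcase
    have hlt2 : 16 * V1 < (d : ℝ) * ((1 - p) * gap ^ 2) := by
      rw [div_lt_iff₀ (mul_pos (by linarith : (0:ℝ) < 1 - p) (pow_pos hgap0 2))] at hlt
      exact hlt
    rw [hid] at hreal
    rw [le_div_iff₀ (by positivity : (0:ℝ) < (d : ℝ) * gap ^ 2)] at hreal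
    linarith only [hreal, hlt2]
  -- step 2 : tau side
  have hdgap : 1 ≤ (d : ℝ) * gap := by
    have h1 : 1 / gap < (d : ℝ) := lt_of_le_of_lt (le_max_right _ _) hcase
    rw [div_lt_iff₀ hgap0] at h1
    linarith only [h1]
  set w : ℝ := ∑ i, (z i) ^ 2 with hwdef
  have hw0 : 0 ≤ w := Finset.sum_nonneg fun i _ => sq_nonneg _
  have hwε : w ≤ ε ^ 2 := by
    calc w = Real.sqrt w ^ 2 := (Real.sq_sqrt hw0).symm
      _ ≤ ε ^ 2 := by
        apply pow_le_pow_left₀ (Real.sqrt_nonneg _) _ 2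
        exact hz
  have hw14 : w ≤ 1 / 4 := by
    have h := pow_le_pow_left₀ hε1.le hε2 2
    norm_num at h
    linarith only [hwε, h]
  set G : Fin d → ℝ → ℝ := fun i t => (τ * t + z i) ^ 2 - (τ ^ 2 + (z i) ^ 2) with hGdef
  have hGm : ∀ i, Measurable (G i) := by
    intro i
    apply Measurable.sub _ measurable_const
    exact (measurable_const.mul measurable_id |>.add measurable_const).pow_const 2
  have hfint : ∀ i : Fin d, Integrable (fun t => (τ * t + z i) ^ 2) μ := by
    intro i
    have he : (fun t : ℝ => (τ * t + z i) ^ 2)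
        = fun t => (z i) ^ 2 + (2 * τ * z i) * t + τ ^ 2 * t ^ 2 + 0 * t ^ 3 + 0 * t ^ 4 :=
      funext fun t => by ring
    rw [he]; exact CurseAux.integrable_poly4 μ hint _ _ _ _ _
  have hf2int : ∀ i : Fin d, Integrable (fun t => ((τ * t + z i) ^ 2) ^ 2) μ := by
    intro i
    have he : (fun t : ℝ => ((τ * t + z i) ^ 2) ^ 2)
        = fun t => (z i) ^ 4 + (4 * τ * (z i) ^ 3) * t + (6 * τ ^ 2 * (z i) ^ 2) * t ^ 2
            + (4 * τ ^ 3 * z i) * t ^ 3 + τ ^ 4 * t ^ 4 :=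
      funext fun t => by ring
    rw [he]; exact CurseAux.integrable_poly4 μ hint _ _ _ _ _
  have hfmean : ∀ i : Fin d, ∫ t, (τ * t + z i) ^ 2 ∂μ = τ ^ 2 + (z i) ^ 2 := by
    intro i
    have he : (fun t : ℝ => (τ * t + z i) ^ 2)
        = fun t => (τ ^ 2 * t ^ 2 + (2 * τ * z i) * t) + (z i) ^ 2 :=
      funext fun t => by ring
    rw [he]
    have h1 : Integrable (fun t : ℝ => τ ^ 2 * t ^ 2) μ := hμ2.const_mul _
    have h2 : Integrable (fun t : ℝ => (2 * τ * z i) * t) μ := hμ1.const_mul _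
    have h12 : Integrable (fun t : ℝ => τ ^ 2 * t ^ 2 + (2 * τ * z i) * t) μ := h1.add h2
    rw [integral_add h12 (integrable_const _), integral_add h1 h2,
      MeasureTheory.integral_const_mul, MeasureTheory.integral_const_mul, hvar, hmean,
      integral_const]
    simp
  have hG0 : ∀ i : Fin d, ∫ t, G i t ∂μ = 0 := by
    intro i
    simp only [hGdef]
    rw [integral_sub (hfint i) (integrable_const _), hfmean i, integral_const]
    simp
  have hG2int : ∀ i : Fin d, Integrable (fun t => (G i t) ^ 2) μ := by
    intro i
    have he : (fun t : ℝ => (G i t) ^ 2)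
        = fun t => τ ^ 4 + (-(4 * τ ^ 3 * z i)) * t + (4 * τ ^ 2 * (z i) ^ 2 - 2 * τ ^ 4) * t ^ 2
            + (4 * τ ^ 3 * z i) * t ^ 3 + τ ^ 4 * t ^ 4 :=
      funext fun t => by simp only [hGdef]; ring
    rw [he]; exact CurseAux.integrable_poly4 μ hint _ _ _ _ _
  have hG2bound : ∀ i : Fin d, ∫ t, (G i t) ^ 2 ∂μ ≤ 8 * τ ^ 4 * m₄ + 8 * (z i) ^ 4 := by
    intro i
    have hGval : ∫ t, (G i t) ^ 2 ∂μ
        = ∫ t, ((τ * t + z i) ^ 2) ^ 2 ∂μ - (τ ^ 2 + (z i) ^ 2) ^ 2 := by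
      have h := CurseAux.integral_centered_sq μ (hfint i) (hf2int i)
      rw [hfmean i] at h
      simpa only [hGdef] using h
    rw [hGval]
    have hf2b : ∫ t, ((τ * t + z i) ^ 2) ^ 2 ∂μ ≤ 8 * τ ^ 4 * m₄ + 8 * (z i) ^ 4 := by
      have hbig : Integrable (fun t : ℝ => 8 * τ ^ 4 * t ^ 4 + 8 * (z i) ^ 4) μ :=
        (hint.const_mul _).add (integrable_const _)
      have hmono : ∫ t, ((τ * t + z i) ^ 2) ^ 2 ∂μ
          ≤ ∫ t, (8 * τ ^ 4 * t ^ 4 + 8 * (z i) ^ 4) ∂μ := by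
        apply integral_mono (hf2int i) hbig
        intro t
        have hx : ((τ * t + z i) ^ 2) ^ 2 ≤ 8 * (τ * t) ^ 4 + 8 * (z i) ^ 4 := by
          nlinarith [sq_nonneg (τ * t - z i), sq_nonneg (τ * t + z i),
            sq_nonneg ((τ * t) ^ 2 - (z i) ^ 2), sq_nonneg ((τ * t + z i) ^ 2 - 2 * (τ * t) ^ 2 - 2 * (z i) ^ 2),
            sq_nonneg ((τ * t) ^ 2 + (z i) ^ 2)]
        calc ((τ * t + z i) ^ 2) ^ 2 ≤ 8 * (τ * t) ^ 4 + 8 * (z i) ^ 4 := hx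
          _ = 8 * τ ^ 4 * t ^ 4 + 8 * (z i) ^ 4 := by ring
      refine le_trans hmono ?_
      rw [integral_add (hint.const_mul _) (integrable_const _),
        MeasureTheory.integral_const_mul, hm₄, integral_const]
      simp
    linarith only [hf2b, sq_nonneg (τ ^ 2 + (z i) ^ 2)]
  have hGsum : (∑ i, ∫ t, (G i t) ^ 2 ∂μ) ≤ A * (d : ℝ) := by
    have h1 : (∑ i, ∫ t, (G i t) ^ 2 ∂μ) ≤ ∑ i, (8 * τ ^ 4 * m₄ + 8 * (z i) ^ 4) :=
      Finset.sum_le_sum fun i _ => hG2bound i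
    have h2 : (∑ i : Fin d, (8 * τ ^ 4 * m₄ + 8 * (z i) ^ 4))
        = (d : ℝ) * (8 * τ ^ 4 * m₄) + 8 * ∑ i, (z i) ^ 4 := by
      rw [Finset.sum_add_distrib, Finset.sum_const, Finset.card_univ, Fintype.card_fin,
        nsmul_eq_mul, ← Finset.mul_sum]
    have h3 : (∑ i, (z i) ^ 4) ≤ w ^ 2 := by
      have := Finset.sum_sq_le_sq_sum_of_nonneg
        (s := Finset.univ) (f := fun i : Fin d => (z i) ^ 2)
        (fun i _ => sq_nonneg (z i))
      simpa only [← pow_mul, hwdef] using this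
    have h4 : w ^ 2 ≤ 1 := by
      calc w ^ 2 ≤ (1/4 : ℝ) ^ 2 := pow_le_pow_left₀ hw0 hw14 2
        _ ≤ 1 := by norm_num
    simp only [hAdef]
    linarith only [h1, h2, h3, h4, hd1]
  have hsub : {δ : Fin d → ℝ | τ • δ + z ∈ U₀}
      ⊆ {x : Fin d → ℝ | (d : ℝ) * gap / 2 ≤ |∑ i, G i (x i)|} := by
    intro x hx
    simp only [hU₀def, Set.mem_setOf_eq, Set.mem_preimage, Pi.add_apply, Pi.smul_apply,
      smul_eq_mul, Set.mem_Icc] at hx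
    set T : ℝ := ∑ i, (τ * x i + z i) ^ 2 with hTdef
    have hsG : ∑ i, G i (x i) = T - ((d : ℝ) * τ ^ 2 + w) := by
      simp only [hGdef]
      rw [Finset.sum_sub_distrib, Finset.sum_add_distrib, Finset.sum_const, Finset.card_univ,
        Fintype.card_fin, nsmul_eq_mul, hTdef, hwdef]
    rw [Set.mem_setOf_eq, hsG]
    obtain ⟨hx1, hx2⟩ := hx
    rw [le_div_iff₀ hd0] at hx1
    rw [div_le_iff₀ hd0] at hx2
    have hT1 : (d : ℝ) * σ ^ 2 - (d : ℝ) * k ≤ T := by linarith only [hx1]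
    have hT2 : T ≤ (d : ℝ) * σ ^ 2 + (d : ℝ) * k := by linarith only [hx2]
    have hTk : |T - (d : ℝ) * σ ^ 2| ≤ (d : ℝ) * k :=
      abs_le.mpr ⟨by linarith only [hT1], by linarith only [hT2]⟩
    have hb1 : (d : ℝ) * gap ≤ |(d : ℝ) * σ ^ 2 - (d : ℝ) * τ ^ 2 - w| + w := by
      have h1 : |(d : ℝ) * σ ^ 2 - (d : ℝ) * τ ^ 2| = (d : ℝ) * gap := by
        rw [show (d : ℝ) * σ ^ 2 - (d : ℝ) * τ ^ 2 = (d : ℝ) * (σ ^ 2 - τ ^ 2) by ring,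
          abs_mul, abs_of_nonneg hd0.le, hgapdef]
      have h2 := abs_add_le ((d : ℝ) * σ ^ 2 - (d : ℝ) * τ ^ 2 - w) w
      rw [sub_add_cancel] at h2
      rw [abs_of_nonneg hw0] at h2
      linarith [h1 ▸ h2]
    have hb2 : |(d : ℝ) * σ ^ 2 - (d : ℝ) * τ ^ 2 - w| - |T - (d : ℝ) * σ ^ 2|
        ≤ |T - ((d : ℝ) * τ ^ 2 + w)| := by
      have h := abs_sub_abs_le_abs_sub ((d : ℝ) * σ ^ 2 - (d : ℝ) * τ ^ 2 - w)
        ((d : ℝ) * σ ^ 2 - T)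
      rw [show (d : ℝ) * σ ^ 2 - (d : ℝ) * τ ^ 2 - w - ((d : ℝ) * σ ^ 2 - T)
        = T - ((d : ℝ) * τ ^ 2 + w) by ring] at h
      rw [abs_sub_comm ((d : ℝ) * σ ^ 2) T] at h
      exact h
    have hdk : (d : ℝ) * k ≤ (d : ℝ) * gap / 4 := by
      have h := mul_le_mul_of_nonneg_left hkgap hd0.le
      linarith only [h]
    linarith only [hb1, hb2, hTk, hdk, hdgap, hw14]
  calc (Measure.pi fun _ : Fin d => μ) {δ | τ • δ + z ∈ U₀}
      ≤ (Measure.pi fun _ : Fin d => μ)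
        {x : Fin d → ℝ | (d : ℝ) * gap / 2 ≤ |∑ i, G i (x i)|} := measure_mono hsub
    _ ≤ ENNReal.ofReal ((∑ i, ∫ t, (G i t) ^ 2 ∂μ) / ((d : ℝ) * gap / 2) ^ 2) :=
        CurseAux.chebyshev_pi (μ := μ) G hGm hG2int hG0 (by positivity)
    _ ≤ ENNReal.ofReal (C / (d : ℝ)) := by
        apply ENNReal.ofReal_le_ofReal
        have hden : (0 : ℝ) < ((d : ℝ) * gap / 2) ^ 2 := by positivity
        have h1 : (∑ i, ∫ t, (G i t) ^ 2 ∂μ) / ((d : ℝ) * gap / 2) ^ 2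
            ≤ A * (d : ℝ) / ((d : ℝ) * gap / 2) ^ 2 := by
          gcongr
        have h2 : A * (d : ℝ) / ((d : ℝ) * gap / 2) ^ 2 = (4 * A / gap ^ 2) / (d : ℝ) := by
          field_simp
          ring
        have h3 : 4 * A / gap ^ 2 ≤ C := by
          have := le_max_right (D + 1) (4 * A / gap ^ 2)
          simp only [hCdef]; linarith
        calc (∑ i, ∫ t, (G i t) ^ 2 ∂μ) / ((d : ℝ) * gap / 2) ^ 2
            ≤ A * (d : ℝ) / ((d : ℝ) * gap / 2) ^ 2 := h1
          _ = (4 * A / gap ^ 2) / (d : ℝ) := h2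
          _ ≤ C / (d : ℝ) := by gcongr
end

section
/- Let p ∈ (1/2, 1), σ, τ > 0 with σ ≠ τ, and ε ∈ (0, 1/2]. There exists a constant C > 0, depending only on m₄, σ, τ, ε and p, such that for every d ≥ 1, every z ∈ ℝ^d with ‖z‖₂ ≤ ε, and every k with 0 ≤ k ≤ σ²η/√(d(1−p)), one has ℙ(‖τδ + z‖₂²/d ∈ [σ² − k, σ² + k]) ≤ C/d. -/
open MeasureTheory

lemma aux_prod_two {M : Type*} [CommMonoid M] {d : ℕ} {i j : Fin d} (hij : i ≠ j)
    (F : Fin d → M) (hF : ∀ l, l ≠ i → l ≠ j → F l = 1) :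
    ∏ l, F l = F i * F j := by
  classical
  rw [← Finset.prod_pair hij]
  exact (Finset.prod_subset (Finset.subset_univ _) (fun l _ hl => by
    simp only [Finset.mem_insert, Finset.mem_singleton, not_or] at hl
    exact hF l hl.1 hl.2)).symm

lemma aux_integral_eval (μ : Measure ℝ) [IsProbabilityMeasure μ] {d : ℕ} (i : Fin d)
    (h : ℝ → ℝ) :
    ∫ x : Fin d → ℝ, h (x i) ∂(Measure.pi fun _ : Fin d => μ) = ∫ t, h t ∂μ := by
  classical
  letI : MeasureSpace ℝ := ⟨μ⟩
  haveI : SigmaFinite (volume : Measure ℝ) := inferInstanceAs (SigmaFinite μ)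
  have hv : (Measure.pi fun _ : Fin d => μ) = (volume : Measure (Fin d → ℝ)) := rfl
  have main := MeasureTheory.integral_fintype_prod_volume_eq_prod (ι := Fin d)
    (fun l (t : ℝ) => if l = i then h t else 1)
  rw [hv]
  have h1 : (fun x : Fin d → ℝ => h (x i))
      = fun x : Fin d → ℝ => ∏ l, (fun l (t : ℝ) => if l = i then h t else 1) l (x l) := by
    funext x
    rw [Finset.prod_eq_single i (fun l _ hl => by simp [hl]) (by simp)]
    simp
  rw [h1, main, Finset.prod_eq_single i (fun l _ hl => by simp [hl]) (by simp)]
  simp only [if_pos rfl]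
  rfl

lemma aux_integral_eval_mul (μ : Measure ℝ) [IsProbabilityMeasure μ] {d : ℕ} {i j : Fin d}
    (hij : i ≠ j) (g h : ℝ → ℝ) :
    ∫ x : Fin d → ℝ, g (x i) * h (x j) ∂(Measure.pi fun _ : Fin d => μ)
      = (∫ t, g t ∂μ) * ∫ t, h t ∂μ := by
  classical
  letI : MeasureSpace ℝ := ⟨μ⟩
  haveI : SigmaFinite (volume : Measure ℝ) := inferInstanceAs (SigmaFinite μ)
  have hv : (Measure.pi fun _ : Fin d => μ) = (volume : Measure (Fin d → ℝ)) := rfl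
  have main := MeasureTheory.integral_fintype_prod_volume_eq_prod (ι := Fin d)
    (fun l (t : ℝ) => if l = i then g t else if l = j then h t else 1)
  rw [hv]
  have h1 : (fun x : Fin d → ℝ => g (x i) * h (x j))
      = fun x : Fin d → ℝ => ∏ l,
        (fun l (t : ℝ) => if l = i then g t else if l = j then h t else 1) l (x l) := by
    funext x
    rw [aux_prod_two hij _ (fun l hl1 hl2 => by simp [hl1, hl2])]
    simp [hij, Ne.symm hij]
  rw [h1, main, aux_prod_two hij _ (fun l hl1 hl2 => by simp [hl1, hl2])]
  simp only [if_pos rfl, if_neg hij, if_neg (Ne.symm hij)]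
  rfl

lemma aux_integrable_eval (μ : Measure ℝ) [IsProbabilityMeasure μ] {d : ℕ} (i : Fin d)
    {h : ℝ → ℝ} (hh : Integrable h μ) :
    Integrable (fun x : Fin d → ℝ => h (x i)) (Measure.pi fun _ : Fin d => μ) := by
  classical
  letI : MeasureSpace ℝ := ⟨μ⟩
  haveI : SigmaFinite (volume : Measure ℝ) := inferInstanceAs (SigmaFinite μ)
  have hv : (Measure.pi fun _ : Fin d => μ) = (volume : Measure (Fin d → ℝ)) := rfl
  rw [hv]
  have h1 : (fun x : Fin d → ℝ => h (x i))
      = fun x : Fin d → ℝ => ∏ l, (fun l (t : ℝ) => if l = i then h t else 1) l (x l) := by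
    funext x
    rw [Finset.prod_eq_single i (fun l _ hl => by simp [hl]) (by simp)]
    simp
  rw [h1]
  refine Integrable.fintype_prod (𝕜 := ℝ)
    (f := fun l (t : ℝ) => if l = i then h t else 1) (fun l => ?_)
  by_cases hl : l = i
  · simp only [hl, if_true]
    exact hh
  · simp only [hl, if_false]
    exact integrable_const 1

lemma aux_integrable_eval_mul (μ : Measure ℝ) [IsProbabilityMeasure μ] {d : ℕ} {i j : Fin d}
    (hij : i ≠ j) {g h : ℝ → ℝ} (hg : Integrable g μ) (hh : Integrable h μ) :
    Integrable (fun x : Fin d → ℝ => g (x i) * h (x j)) (Measure.pi fun _ : Fin d => μ) := by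
  classical
  letI : MeasureSpace ℝ := ⟨μ⟩
  haveI : SigmaFinite (volume : Measure ℝ) := inferInstanceAs (SigmaFinite μ)
  have hv : (Measure.pi fun _ : Fin d => μ) = (volume : Measure (Fin d → ℝ)) := rfl
  rw [hv]
  have h1 : (fun x : Fin d → ℝ => g (x i) * h (x j))
      = fun x : Fin d → ℝ => ∏ l,
        (fun l (t : ℝ) => if l = i then g t else if l = j then h t else 1) l (x l) := by
    funext x
    rw [aux_prod_two hij _ (fun l hl1 hl2 => by simp [hl1, hl2])]
    simp [hij, Ne.symm hij]
  rw [h1]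
  refine Integrable.fintype_prod (𝕜 := ℝ)
    (f := fun l (t : ℝ) => if l = i then g t else if l = j then h t else 1) (fun l => ?_)
  by_cases hl1 : l = i
  · simp only [hl1, if_true]
    exact hg
  · simp only [hl1, if_false]
    by_cases hl2 : l = j
    · simp only [hl2, if_true]
      exact hh
    · simp only [hl2, if_false]
      exact integrable_const 1


lemma aux_term_integrable (μ : Measure ℝ) [IsProbabilityMeasure μ] {d : ℕ}
    (g : Fin d → ℝ → ℝ) (hg1 : ∀ i, Integrable (g i) μ)
    (hg2 : ∀ i, Integrable (fun t => g i t * g i t) μ) (i j : Fin d) :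
    Integrable (fun x : Fin d → ℝ => g i (x i) * g j (x j))
      (Measure.pi fun _ : Fin d => μ) := by
  by_cases hij : i = j
  · subst hij
    exact aux_integrable_eval μ i (hg2 i)
  · exact aux_integrable_eval_mul μ hij (hg1 i) (hg1 j)

lemma aux_sq_sum_integrable (μ : Measure ℝ) [IsProbabilityMeasure μ] {d : ℕ}
    (g : Fin d → ℝ → ℝ) (hg1 : ∀ i, Integrable (g i) μ)
    (hg2 : ∀ i, Integrable (fun t => g i t * g i t) μ) :
    Integrable (fun x : Fin d → ℝ => (∑ i, g i (x i)) ^ 2)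
      (Measure.pi fun _ : Fin d => μ) := by
  have hrw : (fun x : Fin d → ℝ => (∑ i, g i (x i)) ^ 2)
      = fun x : Fin d → ℝ => ∑ i, ∑ j, g i (x i) * g j (x j) := by
    funext x
    rw [sq, Finset.sum_mul_sum]
  rw [hrw]
  exact integrable_finset_sum _ (fun i _ => integrable_finset_sum _
    (fun j _ => aux_term_integrable μ g hg1 hg2 i j))

lemma aux_second_moment (μ : Measure ℝ) [IsProbabilityMeasure μ] {d : ℕ}
    (g : Fin d → ℝ → ℝ) (hg1 : ∀ i, Integrable (g i) μ)
    (hg2 : ∀ i, Integrable (fun t => g i t * g i t) μ)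
    (hmean : ∀ i, ∫ t, g i t ∂μ = 0) :
    ∫ x : Fin d → ℝ, (∑ i, g i (x i)) ^ 2 ∂(Measure.pi fun _ : Fin d => μ)
      = ∑ i, ∫ t, g i t * g i t ∂μ := by
  have hrw : (fun x : Fin d → ℝ => (∑ i, g i (x i)) ^ 2)
      = fun x : Fin d → ℝ => ∑ i, ∑ j, g i (x i) * g j (x j) := by
    funext x
    rw [sq, Finset.sum_mul_sum]
  rw [hrw, integral_finset_sum _ (fun i _ => integrable_finset_sum _
    (fun j _ => aux_term_integrable μ g hg1 hg2 i j))]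
  refine Finset.sum_congr rfl (fun i _ => ?_)
  rw [integral_finset_sum _ (fun j _ => aux_term_integrable μ g hg1 hg2 i j)]
  rw [Finset.sum_eq_single i (fun j _ hj => by
    rw [aux_integral_eval_mul μ (Ne.symm hj), hmean j, mul_zero]) (by simp)]
  exact aux_integral_eval μ i (fun t => g i t * g i t)


set_option maxHeartbeats 1000000 in
/-- Lemma 3 with the explicit bound on the annulus half-width `k`. `δ : Fin d → ℝ` has law
`μ^⊗d` with `μ` of zero mean, unit variance and fourth moment `m₄`; `η := √(m₄ − 1)`.
Let `p ∈ (1/2, 1)`, `σ, τ > 0` with `σ ≠ τ`, `ε ∈ (0, 1/2]`. There is `C > 0`, depending only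
on `m₄, σ, τ, ε, p`, such that for every `d ≥ 1`, every `z` with `‖z‖₂ ≤ ε`, and every
`0 ≤ k ≤ σ²η/√(d(1−p))`, one has `ℙ(‖τδ + z‖₂²/d ∈ [σ² − k, σ² + k]) ≤ C/d`. -/
theorem annulus_probability_decay
    (μ : Measure ℝ) [IsProbabilityMeasure μ]
    (hmean : ∫ t, t ∂μ = 0) (hvar : ∫ t, t ^ 2 ∂μ = 1)
    (hint : Integrable (fun t : ℝ => t ^ 4) μ)
    (m₄ : ℝ) (hm₄ : ∫ t, t ^ 4 ∂μ = m₄)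
    (p σ τ ε : ℝ)
    (hp : p ∈ Set.Ioo (1 / 2 : ℝ) 1) (hσ : 0 < σ) (hτ : 0 < τ) (hστ : σ ≠ τ)
    (hε : ε ∈ Set.Ioc (0 : ℝ) (1 / 2)) :
    ∃ C : ℝ, 0 < C ∧ ∀ d : ℕ, 1 ≤ d → ∀ z : Fin d → ℝ,
      Real.sqrt (∑ i, (z i) ^ 2) ≤ ε →
      ∀ k : ℝ, 0 ≤ k → k ≤ σ ^ 2 * Real.sqrt (m₄ - 1) / Real.sqrt ((d : ℝ) * (1 - p)) →
      (Measure.pi fun _ : Fin d => μ)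
        {δ | (∑ i, (τ * δ i + z i) ^ 2) / (d : ℝ) ∈ Set.Icc (σ ^ 2 - k) (σ ^ 2 + k)}
        ≤ ENNReal.ofReal (C / (d : ℝ)) := by
  obtain ⟨hp1, hp2⟩ := hp
  obtain ⟨hε1, hε2⟩ := hε
  -- basic constants
  have hm₄0 : 0 ≤ m₄ := by
    rw [← hm₄]; exact integral_nonneg (fun t => by positivity)
  set Δ : ℝ := |σ ^ 2 - τ ^ 2| with hΔdef
  have hΔ : 0 < Δ := by
    have : σ ^ 2 ≠ τ ^ 2 := fun h => hστ (by
      have h1 : σ = Real.sqrt (σ ^ 2) := (Real.sqrt_sq hσ.le).symm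
      rw [h1, h, Real.sqrt_sq hτ.le])
    exact abs_pos.2 (sub_ne_zero.2 this)
  set B : ℝ := σ ^ 2 * Real.sqrt (m₄ - 1) / Real.sqrt (1 - p) with hBdef
  have hB : 0 ≤ B := by positivity
  set M : ℝ := 3 * τ ^ 4 * m₄ + 3 * τ ^ 2 + 3 * τ ^ 4 with hMdef
  have hM : 0 < M := by positivity
  set D₀ : ℝ := 16 * B ^ 2 / Δ ^ 2 + 1 / Δ + 1 with hD₀def
  have hD₀ : 1 ≤ D₀ := by
    have h1 : 0 ≤ 16 * B ^ 2 / Δ ^ 2 := by positivity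
    have h2 : 0 ≤ 1 / Δ := by positivity
    rw [hD₀def]; linarith
  have hMdiv : 0 < 4 * M / Δ ^ 2 := div_pos (by linarith) (pow_pos hΔ 2)
  clear_value Δ B M D₀
  refine ⟨D₀ + 4 * M / Δ ^ 2 + 1, by linarith, ?_⟩
  set C : ℝ := D₀ + 4 * M / Δ ^ 2 + 1 with hCdef
  clear_value C
  have hC1 : D₀ + 4 * M / Δ ^ 2 + 1 = C := hCdef.symm
  intro d hd z hz k hk0 hk
  have hd1 : (1 : ℝ) ≤ (d : ℝ) := by exact_mod_cast hd
  have hdpos : (0 : ℝ) < (d : ℝ) := by linarith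
  -- bounds on z
  have hz2 : ∑ i, (z i) ^ 2 ≤ ε ^ 2 := by
    have h1 : Real.sqrt (∑ i, (z i) ^ 2) ^ 2 ≤ ε ^ 2 :=
      pow_le_pow_left₀ (Real.sqrt_nonneg _) hz 2
    rwa [Real.sq_sqrt (Finset.sum_nonneg (fun i _ => sq_nonneg _))] at h1
  have hε4 : ε ^ 2 ≤ 1 / 4 := by nlinarith
  have hzsum : ∑ i, (z i) ^ 2 ≤ 1 / 4 := le_trans hz2 hε4
  have hzsum0 : 0 ≤ ∑ i, (z i) ^ 2 := Finset.sum_nonneg (fun i _ => sq_nonneg _)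
  have hzi : ∀ i, (z i) ^ 2 ≤ 1 / 4 := fun i =>
    le_trans (Finset.single_le_sum (fun j _ => sq_nonneg (z j)) (Finset.mem_univ i)) hzsum
  -- integrability of monomials
  have habs : ∀ (t : ℝ) (n : ℕ), n ≤ 4 → |t| ^ n ≤ t ^ 4 + 1 := by
    intro t n hn
    rcases le_total (|t|) 1 with h | h
    · have h1 : |t| ^ n ≤ 1 := pow_le_one₀ (abs_nonneg t) h
      nlinarith [pow_nonneg (abs_nonneg t) 4, sq_nonneg (t ^ 2), sq_abs t]
    · have h1 : |t| ^ n ≤ |t| ^ 4 := pow_le_pow_right₀ h hn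
      have h2 : |t| ^ 4 = t ^ 4 := by
        rw [← abs_pow]; exact abs_of_nonneg (by positivity)
      nlinarith
  have hmono : ∀ (f : ℝ → ℝ), Continuous f → (∀ t, |f t| ≤ t ^ 4 + 1) → Integrable f μ := by
    intro f hc hb
    exact (hint.add (integrable_const 1)).mono' hc.aestronglyMeasurable
      (Filter.Eventually.of_forall (fun t => by simpa using hb t))
  have hmon : ∀ n : ℕ, n ≤ 4 → Integrable (fun t : ℝ => t ^ n) μ := by
    intro n hn
    exact hmono _ (continuous_pow n) (fun t => by rw [abs_pow]; exact habs t n hn)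
  have hmon2 : Integrable (fun t : ℝ => t ^ 2) μ := hmon 2 (by norm_num)
  have hmon1 : Integrable (fun t : ℝ => t) μ := by
    have := hmon 1 (by norm_num); simpa using this
  -- the centered functions
  set g : Fin d → ℝ → ℝ := fun i t => τ ^ 2 * t ^ 2 + 2 * τ * z i * t - τ ^ 2 with hgdef
  have hg1 : ∀ i, Integrable (g i) μ := fun i =>
    ((hmon2.const_mul (τ ^ 2)).add (hmon1.const_mul (2 * τ * z i))).sub
      (integrable_const (τ ^ 2))
  have hgc : ∀ i, Continuous (g i) := fun i => by fun_prop
  have hRint : ∀ i, Integrable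
      (fun t : ℝ => 3 * τ ^ 4 * t ^ 4 + 12 * τ ^ 2 * (z i) ^ 2 * t ^ 2 + 3 * τ ^ 4) μ :=
    fun i => ((hint.const_mul (3 * τ ^ 4)).add
      (hmon2.const_mul (12 * τ ^ 2 * (z i) ^ 2))).add (integrable_const (3 * τ ^ 4))
  have tri : ∀ a b c : ℝ, (a + b - c) * (a + b - c) ≤ 3 * a ^ 2 + 3 * b ^ 2 + 3 * c ^ 2 := by
    intro a b c
    have key : 3 * a ^ 2 + 3 * b ^ 2 + 3 * c ^ 2 - (a + b - c) * (a + b - c)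
        = (a - b) ^ 2 + (a + c) ^ 2 + (b + c) ^ 2 := by ring
    linarith [sq_nonneg (a - b), sq_nonneg (a + c), sq_nonneg (b + c), key]
  have hgle : ∀ i t, g i t * g i t
      ≤ 3 * τ ^ 4 * t ^ 4 + 12 * τ ^ 2 * (z i) ^ 2 * t ^ 2 + 3 * τ ^ 4 := by
    intro i t
    have h1 := tri (τ ^ 2 * t ^ 2) (2 * τ * z i * t) (τ ^ 2)
    calc g i t * g i t
        = (τ ^ 2 * t ^ 2 + 2 * τ * z i * t - τ ^ 2)
          * (τ ^ 2 * t ^ 2 + 2 * τ * z i * t - τ ^ 2) := by simp only [hgdef]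
      _ ≤ 3 * (τ ^ 2 * t ^ 2) ^ 2 + 3 * (2 * τ * z i * t) ^ 2 + 3 * (τ ^ 2) ^ 2 := h1
      _ = 3 * τ ^ 4 * t ^ 4 + 12 * τ ^ 2 * (z i) ^ 2 * t ^ 2 + 3 * τ ^ 4 := by ring
  have hg2 : ∀ i, Integrable (fun t => g i t * g i t) μ := by
    intro i
    refine (hRint i).mono' (((hgc i).mul (hgc i)).aestronglyMeasurable)
      (Filter.Eventually.of_forall (fun t => ?_))
    have h0 : 0 ≤ g i t * g i t := mul_self_nonneg _
    rw [Real.norm_eq_abs, abs_of_nonneg h0]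
    exact hgle i t
  have hgmean : ∀ i, ∫ t, g i t ∂μ = 0 := by
    intro i
    have h1 : ∫ t, g i t ∂μ
        = (∫ t, τ ^ 2 * t ^ 2 + 2 * τ * z i * t ∂μ) - ∫ _t, τ ^ 2 ∂μ := by
      exact integral_sub ((hmon2.const_mul (τ ^ 2)).add (hmon1.const_mul (2 * τ * z i)))
        (integrable_const (τ ^ 2))
    rw [h1, integral_add (hmon2.const_mul (τ ^ 2)) (hmon1.const_mul (2 * τ * z i)),
      integral_const_mul, integral_const_mul, hvar, hmean, integral_const]
    simp
  -- variance bound for each coordinate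
  have hvar_i : ∀ i, ∫ t, g i t * g i t ∂μ ≤ M := by
    intro i
    have h1 : ∫ t, g i t * g i t ∂μ
        ≤ ∫ t, 3 * τ ^ 4 * t ^ 4 + 12 * τ ^ 2 * (z i) ^ 2 * t ^ 2 + 3 * τ ^ 4 ∂μ :=
      integral_mono (hg2 i) (hRint i) (fun t => hgle i t)
    have h2 : ∫ t, 3 * τ ^ 4 * t ^ 4 + 12 * τ ^ 2 * (z i) ^ 2 * t ^ 2 + 3 * τ ^ 4 ∂μ
        = 3 * τ ^ 4 * m₄ + 12 * τ ^ 2 * (z i) ^ 2 + 3 * τ ^ 4 := by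
      have hA : Integrable (fun t : ℝ => 3 * τ ^ 4 * t ^ 4 + 12 * τ ^ 2 * (z i) ^ 2 * t ^ 2) μ :=
        (hint.const_mul (3 * τ ^ 4)).add (hmon2.const_mul (12 * τ ^ 2 * (z i) ^ 2))
      rw [integral_add hA (integrable_const (3 * τ ^ 4)),
        integral_add (hint.const_mul (3 * τ ^ 4)) (hmon2.const_mul (12 * τ ^ 2 * (z i) ^ 2)),
        integral_const_mul, integral_const_mul, hm₄, hvar, integral_const]
      simp
    have h3 : 12 * τ ^ 2 * (z i) ^ 2 ≤ 3 * τ ^ 2 := by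
      have h4 := mul_le_mul_of_nonneg_left (hzi i) (by positivity : (0 : ℝ) ≤ 12 * τ ^ 2)
      linarith
    rw [hMdef]; linarith
  -- second moment bound
  have hSM : ∫ x : Fin d → ℝ, (∑ i, g i (x i)) ^ 2 ∂(Measure.pi fun _ : Fin d => μ)
      ≤ (d : ℝ) * M := by
    rw [aux_second_moment μ g hg1 hg2 hgmean]
    calc ∑ i, ∫ t, g i t * g i t ∂μ ≤ ∑ _i : Fin d, M :=
          Finset.sum_le_sum (fun i _ => hvar_i i)
      _ = (d : ℝ) * M := by
          rw [Finset.sum_const, Finset.card_univ, Fintype.card_fin, nsmul_eq_mul]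
  -- pointwise identity
  have hid : ∀ x : Fin d → ℝ, ∑ i, g i (x i)
      = (∑ i, (τ * x i + z i) ^ 2) - ((d : ℝ) * τ ^ 2 + ∑ i, (z i) ^ 2) := by
    intro x
    have h1 : ∀ i, g i (x i) = (τ * x i + z i) ^ 2 - τ ^ 2 - (z i) ^ 2 := fun i => by
      simp only [hgdef]; ring
    calc ∑ i, g i (x i) = ∑ i, ((τ * x i + z i) ^ 2 - τ ^ 2 - (z i) ^ 2) :=
          Finset.sum_congr rfl (fun i _ => h1 i)
      _ = (∑ i, (τ * x i + z i) ^ 2) - (∑ _i : Fin d, τ ^ 2) - ∑ i, (z i) ^ 2 := by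
          rw [Finset.sum_sub_distrib, Finset.sum_sub_distrib]
      _ = _ := by
          rw [Finset.sum_const, Finset.card_univ, Fintype.card_fin, nsmul_eq_mul]; ring
  by_cases hcase : (d : ℝ) < D₀
  · -- small d : trivial bound
    have h1 : (1 : ℝ) ≤ C / (d : ℝ) := by
      rw [le_div_iff₀ hdpos, one_mul, ← hC1]
      linarith
    calc (Measure.pi fun _ : Fin d => μ)
          {δ | (∑ i, (τ * δ i + z i) ^ 2) / (d : ℝ) ∈ Set.Icc (σ ^ 2 - k) (σ ^ 2 + k)}
        ≤ 1 := prob_le_one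
      _ = ENNReal.ofReal 1 := by simp
      _ ≤ ENNReal.ofReal (C / (d : ℝ)) := ENNReal.ofReal_le_ofReal h1
  · push_neg at hcase
    -- k is small
    have hsd : 0 < Real.sqrt (d : ℝ) := Real.sqrt_pos.2 hdpos
    have hsp : 0 < Real.sqrt (1 - p) := Real.sqrt_pos.2 (by linarith)
    have hkB : k ≤ B / Real.sqrt (d : ℝ) := by
      have h1 : Real.sqrt ((d : ℝ) * (1 - p))
          = Real.sqrt (d : ℝ) * Real.sqrt (1 - p) := Real.sqrt_mul (le_of_lt hdpos) _
      rw [hBdef]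
      calc k ≤ σ ^ 2 * Real.sqrt (m₄ - 1) / Real.sqrt ((d : ℝ) * (1 - p)) := hk
        _ = σ ^ 2 * Real.sqrt (m₄ - 1) / Real.sqrt (1 - p) / Real.sqrt (d : ℝ) := by
            rw [h1, div_div]; ring_nf
    have hsqd : 4 * B / Δ ≤ Real.sqrt (d : ℝ) := by
      have h1 : (4 * B / Δ) ^ 2 ≤ (d : ℝ) := by
        have : 16 * B ^ 2 / Δ ^ 2 ≤ D₀ := by
          rw [hD₀def]
          have : 0 < 1 / Δ := by positivity
          linarith
        calc (4 * B / Δ) ^ 2 = 16 * B ^ 2 / Δ ^ 2 := by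
              field_simp [hΔ.ne']
              try ring
          _ ≤ D₀ := this
          _ ≤ (d : ℝ) := hcase
      calc 4 * B / Δ = Real.sqrt ((4 * B / Δ) ^ 2) :=
            (Real.sqrt_sq (div_nonneg (by linarith) hΔ.le)).symm
        _ ≤ Real.sqrt (d : ℝ) := Real.sqrt_le_sqrt h1
    have hk4 : k ≤ Δ / 4 := by
      have h2 : B / Real.sqrt (d : ℝ) ≤ Δ / 4 := by
        rw [div_le_div_iff₀ hsd (by norm_num)]
        have h5 : 4 * B ≤ Real.sqrt (d : ℝ) * Δ := by
          calc 4 * B = (4 * B / Δ) * Δ := by field_simp [hΔ.ne']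
            _ ≤ Real.sqrt (d : ℝ) * Δ := mul_le_mul_of_nonneg_right hsqd (le_of_lt hΔ)
        linarith
      linarith [hkB]
    have hdΔ : 1 ≤ (d : ℝ) * Δ := by
      have h1 : 1 / Δ ≤ D₀ := by
        rw [hD₀def]; have : 0 ≤ 16 * B ^ 2 / Δ ^ 2 := by positivity
        linarith
      have h2 : 1 / Δ ≤ (d : ℝ) := le_trans h1 hcase
      calc (1 : ℝ) = (1 / Δ) * Δ := by field_simp [hΔ.ne']
        _ ≤ (d : ℝ) * Δ := mul_le_mul_of_nonneg_right h2 (le_of_lt hΔ)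
    -- event inclusion
    have hsub : {δ : Fin d → ℝ |
          (∑ i, (τ * δ i + z i) ^ 2) / (d : ℝ) ∈ Set.Icc (σ ^ 2 - k) (σ ^ 2 + k)}
        ⊆ {x : Fin d → ℝ | ((d : ℝ) * Δ / 2) ^ 2 ≤ (∑ i, g i (x i)) ^ 2} := by
      intro x hx
      simp only [Set.mem_setOf_eq, Set.mem_Icc] at hx ⊢
      obtain ⟨hx1, hx2⟩ := hx
      set S : ℝ := ∑ i, (τ * x i + z i) ^ 2 with hSdef
      have hS1 : (d : ℝ) * (σ ^ 2 - k) ≤ S := by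
        have h := (le_div_iff₀ hdpos).1 hx1
        linarith
      have hS2 : S ≤ (d : ℝ) * (σ ^ 2 + k) := by
        have h := (div_le_iff₀ hdpos).1 hx2
        linarith
      set w : ℝ := ∑ i, (z i) ^ 2 with hwdef
      have hG : ∑ i, g i (x i) = S - ((d : ℝ) * τ ^ 2 + w) := hid x
      have hdk : (d : ℝ) * k ≤ (d : ℝ) * Δ / 4 := by
        calc (d : ℝ) * k ≤ (d : ℝ) * (Δ / 4) :=
              mul_le_mul_of_nonneg_left hk4 (le_of_lt hdpos)
          _ = (d : ℝ) * Δ / 4 := by ring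
      have hw4 : w ≤ (d : ℝ) * Δ / 4 := by
        calc w ≤ 1 / 4 := hzsum
          _ ≤ (d : ℝ) * Δ / 4 := by linarith
      have habsG : (d : ℝ) * Δ / 2 ≤ |∑ i, g i (x i)| := by
        rcases le_or_gt (σ ^ 2) (τ ^ 2) with hc | hc
        · have hΔeq : Δ = τ ^ 2 - σ ^ 2 := by
            rw [hΔdef, abs_of_nonpos (by linarith)]; ring
          have h1 : (d : ℝ) * Δ / 2 ≤ -(∑ i, g i (x i)) := by
            rw [hG]
            have : (d : ℝ) * τ ^ 2 - (d : ℝ) * (σ ^ 2 + k) = (d : ℝ) * Δ - (d : ℝ) * k := by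
              rw [hΔeq]; ring
            linarith [hzsum0, hdΔ]
          calc (d : ℝ) * Δ / 2 ≤ -(∑ i, g i (x i)) := h1
            _ ≤ |∑ i, g i (x i)| := neg_le_abs _
        · have hΔeq : Δ = σ ^ 2 - τ ^ 2 := by
            rw [hΔdef, abs_of_pos (by linarith)]
          have h1 : (d : ℝ) * Δ / 2 ≤ ∑ i, g i (x i) := by
            rw [hG]
            have : (d : ℝ) * (σ ^ 2 - k) - (d : ℝ) * τ ^ 2 = (d : ℝ) * Δ - (d : ℝ) * k := by
              rw [hΔeq]; ring
            linarith [hdΔ]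
          calc (d : ℝ) * Δ / 2 ≤ ∑ i, g i (x i) := h1
            _ ≤ |∑ i, g i (x i)| := le_abs_self _
      calc ((d : ℝ) * Δ / 2) ^ 2 ≤ |∑ i, g i (x i)| ^ 2 :=
            pow_le_pow_left₀ (le_of_lt (div_pos (mul_pos hdpos hΔ) two_pos)) habsG 2
        _ = (∑ i, g i (x i)) ^ 2 := sq_abs _
    -- Markov
    have hintsq := aux_sq_sum_integrable μ g hg1 hg2
    have hmark := mul_meas_ge_le_integral_of_nonneg
      (μ := Measure.pi fun _ : Fin d => μ)
      (f := fun x : Fin d → ℝ => (∑ i, g i (x i)) ^ 2)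
      (Filter.Eventually.of_forall (fun x => sq_nonneg _)) hintsq (((d : ℝ) * Δ / 2) ^ 2)
    set ν := Measure.pi fun _ : Fin d => μ with hνdef
    have hsq_pos : 0 < ((d : ℝ) * Δ / 2) ^ 2 :=
      pow_pos (div_pos (mul_pos hdpos hΔ) two_pos) 2
    have htoReal : (ν {x : Fin d → ℝ | ((d : ℝ) * Δ / 2) ^ 2 ≤ (∑ i, g i (x i)) ^ 2}).toReal
        ≤ C / (d : ℝ) := by
      have h1 : ((d : ℝ) * Δ / 2) ^ 2 *
          (ν {x : Fin d → ℝ | ((d : ℝ) * Δ / 2) ^ 2 ≤ (∑ i, g i (x i)) ^ 2}).toReal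
          ≤ (d : ℝ) * M := le_trans hmark hSM
      have h2 : (ν {x : Fin d → ℝ | ((d : ℝ) * Δ / 2) ^ 2 ≤ (∑ i, g i (x i)) ^ 2}).toReal
          ≤ (d : ℝ) * M / ((d : ℝ) * Δ / 2) ^ 2 := by
        rw [le_div_iff₀ hsq_pos]
        linarith [h1]
      refine le_trans h2 ?_
      rw [div_le_div_iff₀ hsq_pos hdpos]
      have h4M : 4 * M ≤ C * Δ ^ 2 := by
        have h5 : C * Δ ^ 2 = (D₀ + 1) * Δ ^ 2 + 4 * M := by
          rw [hCdef]; field_simp [hΔ.ne']; ring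
        have h6 : 0 ≤ (D₀ + 1) * Δ ^ 2 := mul_nonneg (by linarith) (sq_nonneg Δ)
        linarith
      have h7 : (d : ℝ) ^ 2 * (4 * M) ≤ (d : ℝ) ^ 2 * (C * Δ ^ 2) :=
        mul_le_mul_of_nonneg_left h4M (sq_nonneg _)
      calc (d : ℝ) * M * (d : ℝ) = ((d : ℝ) ^ 2 * (4 * M)) / 4 := by ring
        _ ≤ ((d : ℝ) ^ 2 * (C * Δ ^ 2)) / 4 := by linarith
        _ = C * ((d : ℝ) * Δ / 2) ^ 2 := by ring
    calc ν {δ | (∑ i, (τ * δ i + z i) ^ 2) / (d : ℝ) ∈ Set.Icc (σ ^ 2 - k) (σ ^ 2 + k)}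
        ≤ ν {x : Fin d → ℝ | ((d : ℝ) * Δ / 2) ^ 2 ≤ (∑ i, g i (x i)) ^ 2} :=
          measure_mono hsub
      _ = ENNReal.ofReal
          ((ν {x : Fin d → ℝ | ((d : ℝ) * Δ / 2) ^ 2 ≤ (∑ i, g i (x i)) ^ 2}).toReal) :=
          (ENNReal.ofReal_toReal (measure_ne_top _ _)).symm
      _ ≤ ENNReal.ofReal (C / (d : ℝ)) := ENNReal.ofReal_le_ofReal htoReal
end
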